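/- arXiv:1605.08674 — 9 statements merged into one kernel-verified Lean document; each statement's English description precedes it below -/
import Mathlib

section
/- For every γ > 0 there exists a holomorphic function f₀ : 𝔻 → ℂ that minimizes the planar discrepancy functional, i.e. ρ_{C,γ}(f₀) ≤ ρ_{C,γ}(g) for every holomorphic function g : 𝔻 → ℂ. -/
open MeasureTheory Filter Set Metric Polynomial
open scoped ENNReal Topology NNReal

noncomputable section

/-- Normalized area measure on `ℂ`: `dA = (1/π)·(Lebesgue measure)`. -/
def dA : Measure ℂ := (ENNReal.ofReal Real.pi)⁻¹ • volume

/-- The open annulus `𝔸(s,t) = {z : s < |z| < t}`. -/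
def ann (s t : ℝ) : Set ℂ := ball (0:ℂ) t \ closedBall (0:ℂ) s

/-- The Cauchy–Riemann operator `∂̄u = (u_x + i u_y)/2` for complex-valued functions. -/
def dbar (u : ℂ → ℂ) (z : ℂ) : ℂ :=
  (fderiv ℝ u z 1 + Complex.I * fderiv ℝ u z Complex.I) / 2

/-- The Cauchy–Riemann operator `∂̄u = (u_x + i u_y)/2` for real-valued functions. -/
def dbarR (u : ℂ → ℝ) (z : ℂ) : ℂ :=
  (((fderiv ℝ u z 1 : ℝ) : ℂ) + Complex.I * ((fderiv ℝ u z Complex.I : ℝ) : ℂ)) / 2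

/-- The planar discrepancy functional `ρ_{C,γ}(f) = ∫_𝔻 (|f(z)|e^{-γ|z|²} - 1)² dA(z)`. -/
def rhoC (γ : ℝ) (f : ℂ → ℂ) : ℝ≥0∞ :=
  ∫⁻ z in ball (0:ℂ) 1,
    ENNReal.ofReal ((‖f z‖ * Real.exp (-γ * ‖z‖ ^ 2) - 1) ^ 2) ∂dA

/-- The tight planar discrepancy functional
`ρ*_{C,γ}(f) = ∫_ℂ (|f(z)|e^{-γ|z|²} - 1_𝔻(z))² dA(z)`. -/
def rhoCStar (γ : ℝ) (f : ℂ → ℂ) : ℝ≥0∞ :=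
  ∫⁻ z, ENNReal.ofReal ((‖f z‖ * Real.exp (-γ * ‖z‖ ^ 2)
      - (ball (0:ℂ) 1).indicator (fun _ => (1:ℝ)) z) ^ 2) ∂dA

/-- The planar discrepancy density `ρ_C`. -/
def rhoCd : ℝ≥0∞ :=
  liminf (fun γ : ℝ => ⨅ p : Polynomial ℂ, rhoC γ fun z => p.eval z) atTop

/-- The tight planar discrepancy density `ρ_C*`. -/
def rhoCdStar : ℝ≥0∞ :=
  liminf (fun γ : ℝ => ⨅ p : Polynomial ℂ, rhoCStar γ fun z => p.eval z) atTop

/-- The hyperbolic discrepancy functional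
`ρ_{H,r}(f) = (1/log(1/(1-r²))) ∫_{D(0,r)} ((1-|z|²)|f(z)| - 1)² dA(z)/(1-|z|²)`. -/
def rhoH (r : ℝ) (f : ℂ → ℂ) : ℝ≥0∞ :=
  (ENNReal.ofReal (Real.log (1 / (1 - r ^ 2))))⁻¹ *
    ∫⁻ z in ball (0:ℂ) r,
      ENNReal.ofReal (((1 - ‖z‖ ^ 2) * ‖f z‖ - 1) ^ 2
        / (1 - ‖z‖ ^ 2)) ∂dA

/-- The tight hyperbolic discrepancy functional
`ρ*_{H,r}(f) = (1/log(1/(1-r²))) ∫_𝔻 ((1-|z|²)|f(z)| - 1_{D(0,r)}(z))² dA(z)/(1-|z|²)`. -/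
def rhoHStar (r : ℝ) (f : ℂ → ℂ) : ℝ≥0∞ :=
  (ENNReal.ofReal (Real.log (1 / (1 - r ^ 2))))⁻¹ *
    ∫⁻ z in ball (0:ℂ) 1,
      ENNReal.ofReal (((1 - ‖z‖ ^ 2) * ‖f z‖
        - (ball (0:ℂ) r).indicator (fun _ => (1:ℝ)) z) ^ 2
        / (1 - ‖z‖ ^ 2)) ∂dA

/-- The hyperbolic discrepancy density `ρ_H`. -/
def rhoHd : ℝ≥0∞ :=
  liminf (fun r : ℝ => ⨅ p : Polynomial ℂ, rhoH r fun z => p.eval z) (𝓝[<] (1:ℝ))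

/-- The tight hyperbolic discrepancy density `ρ_H*`. -/
def rhoHdStar : ℝ≥0∞ :=
  liminf (fun r : ℝ => ⨅ p : Polynomial ℂ, rhoHStar r fun z => p.eval z) (𝓝[<] (1:ℝ))

/-- `f` is a minimizer of `ρ_{C,γ}` among holomorphic functions on `𝔻`. -/
def IsMinC (γ : ℝ) (f : ℂ → ℂ) : Prop :=
  DifferentiableOn ℂ f (ball 0 1) ∧
    ∀ g : ℂ → ℂ, DifferentiableOn ℂ g (ball 0 1) → rhoC γ f ≤ rhoC γ g

/-- `f` is a minimizer of `ρ_{H,r}` among holomorphic functions on `𝔻`. -/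
def IsMinH (r : ℝ) (f : ℂ → ℂ) : Prop :=
  DifferentiableOn ℂ f (ball 0 1) ∧
    ∀ g : ℂ → ℂ, DifferentiableOn ℂ g (ball 0 1) → rhoH r f ≤ rhoH r g

end


noncomputable section AuxMin
open scoped Real



/-- Canonical Taylor coefficients of a function holomorphic on the unit ball. -/
def myCoeff (f : ℂ → ℂ) (k : ℕ) : ℂ := cauchyPowerSeries f 0 (1/2) k (fun _ => 1)

lemma aux_hasFPSOB {f : ℂ → ℂ} (hf : DifferentiableOn ℂ f (ball 0 1))
    {r : ℝ} (hr0 : 0 < r) (hr1 : r < 1) :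
    HasFPowerSeriesOnBall f (cauchyPowerSeries f 0 r) 0 (ENNReal.ofReal r) := by
  have h1 : closedBall (0:ℂ) r ⊆ ball 0 1 := closedBall_subset_ball hr1
  have h2 : DiffContOnCl ℂ f (ball (0:ℂ) r) := hf.diffContOnCl_ball h1
  have h4 : ((r.toNNReal : ℝ) : ℝ) = r := Real.coe_toNNReal r hr0.le
  rw [show r = ((r.toNNReal : ℝ)) from h4.symm] at h2
  have h3 := h2.hasFPowerSeriesOnBall (R := r.toNNReal) (by simpa [h4] using hr0)
  simpa [ENNReal.ofReal, h4] using h3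

lemma aux_series_eq {f : ℂ → ℂ} (hf : DifferentiableOn ℂ f (ball 0 1))
    {r r' : ℝ} (hr0 : 0 < r) (hr1 : r < 1) (hr0' : 0 < r') (hr1' : r' < 1) :
    cauchyPowerSeries f 0 r = cauchyPowerSeries f 0 r' :=
  (aux_hasFPSOB hf hr0 hr1).hasFPowerSeriesAt.eq_formalMultilinearSeries
    (aux_hasFPSOB hf hr0' hr1').hasFPowerSeriesAt

lemma aux_apply (f : ℂ → ℂ) (r : ℝ) (k : ℕ) (z : ℂ) :
    (cauchyPowerSeries f 0 r k fun _ => z)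
      = (cauchyPowerSeries f 0 r k fun _ => 1) * z ^ k := by
  simp only [cauchyPowerSeries, ContinuousMultilinearMap.mkPiRing_apply, Finset.prod_const,
    Finset.card_univ, Fintype.card_fin, smul_eq_mul, one_pow]
  ring

lemma aux_hasSum {f : ℂ → ℂ} (hf : DifferentiableOn ℂ f (ball 0 1))
    {z : ℂ} (hz : ‖z‖ < 1) :
    HasSum (fun k => myCoeff f k * z ^ k) (f z) := by
  set r := (‖z‖ + 1) / 2 with hr
  have h0 := norm_nonneg z
  have hr0 : 0 < r := by rw [hr]; linarith
  have hzr : ‖z‖ < r := by rw [hr]; linarith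
  have hr1 : r < 1 := by rw [hr]; linarith
  have H := aux_hasFPSOB hf hr0 hr1
  have hmem : z ∈ Metric.eball (0:ℂ) (ENNReal.ofReal r) := by
    rw [Metric.mem_eball, edist_zero_right, ← ofReal_norm]
    exact ENNReal.ofReal_lt_ofReal_iff hr0 |>.2 hzr
  have h5 := H.hasSum hmem
  rw [zero_add] at h5
  have h6 : ∀ k : ℕ, (cauchyPowerSeries f 0 r k fun _ => z) = myCoeff f k * z ^ k := by
    intro k
    rw [aux_series_eq hf hr0 hr1 (r' := 1/2) (by norm_num) (by norm_num), aux_apply, myCoeff]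
  simpa only [h6] using h5




lemma aux_symm_eq (s θ : ℝ) : Complex.polarCoord.symm (s, θ) = circleMap 0 s θ := by
  simp [circleMap, Complex.exp_mul_I]

lemma aux_symm_cont : Continuous (Complex.polarCoord.symm : ℝ × ℝ → ℂ) := by
  have : (Complex.polarCoord.symm : ℝ × ℝ → ℂ)
      = fun p : ℝ × ℝ => (p.1 : ℂ) * (Real.cos p.2 + Real.sin p.2 * Complex.I) := by
    funext p; simp
  rw [this]; fun_prop


lemma aux_pigeonhole {f : ℂ → ℂ} (hf : DifferentiableOn ℂ f (ball 0 1))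
    {r r' C : ℝ} (hr0 : 0 < r) (hrr' : r < r') (hr'1 : r' < 1) (hC0 : 0 ≤ C)
    (hC : ∫⁻ z in ball (0:ℂ) 1, (‖f z‖₊ : ℝ≥0∞) ∂volume ≤ ENNReal.ofReal C) :
    ∃ s ∈ Ioo r r',
      s * ∫ θ in (0)..(2*π), ‖f (circleMap 0 s θ)‖ ≤ C / (r' - r) + 1 := by
  set K := C / (r' - r) + 1 with hK
  have hrr : 0 < r' - r := by linarith
  have hK0 : 0 < K := by positivity
  have hsub : closedBall (0:ℂ) r' ⊆ ball 0 1 := closedBall_subset_ball hr'1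
  have hcont : ContinuousOn f (closedBall (0:ℂ) r') := hf.continuousOn.mono hsub
  set A : Set ℂ := ball (0:ℂ) r' \ closedBall (0:ℂ) r with hA
  have hAm : MeasurableSet A := measurableSet_ball.diff measurableSet_closedBall
  have hAsub : A ⊆ closedBall (0:ℂ) r' := diff_subset.trans ball_subset_closedBall
  have hintf : IntegrableOn f (closedBall (0:ℂ) r') :=
    hcont.integrableOn_compact (isCompact_closedBall _ _)
  -- L¹ bound on the annulus
  have hL1 : ∫ z in A, ‖f z‖ ≤ C := by
    have h1 : ENNReal.ofReal (∫ z in A, ‖f z‖)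
        = ∫⁻ z in A, (‖f z‖₊ : ℝ≥0∞) ∂volume :=
      ofReal_integral_norm_eq_lintegral_enorm (hintf.mono_set hAsub)
    have h2 : (∫⁻ z in A, (‖f z‖₊ : ℝ≥0∞) ∂volume) ≤ ENNReal.ofReal C :=
      le_trans (lintegral_mono_set (hAsub.trans hsub)) hC
    exact (ENNReal.ofReal_le_ofReal_iff hC0).1 (h1 ▸ h2)
  -- polar coordinates
  set B : Set (ℝ × ℝ) := Ioo r r' ×ˢ Ioo (-π) π with hB
  have hBm : MeasurableSet B := measurableSet_Ioo.prod measurableSet_Ioo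
  have hpolar := Complex.integral_comp_polarCoord_symm (A.indicator fun z => ‖f z‖)
  rw [integral_indicator hAm] at hpolar
  have hset : ∀ p ∈ polarCoord.target,
      p.1 • A.indicator (fun z => ‖f z‖) (Complex.polarCoord.symm p)
        = B.indicator (fun p : ℝ × ℝ => p.1 * ‖f (Complex.polarCoord.symm p)‖) p := by
    intro p hp
    rw [show polarCoord.target = Set.Ioi (0:ℝ) ×ˢ Set.Ioo (-π) π from rfl, mem_prod] at hp
    have habs : ‖Complex.polarCoord.symm p‖ = p.1 := by
      rw [Complex.norm_polarCoord_symm, abs_of_pos hp.1]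
    by_cases hmem : p.1 ∈ Ioo r r'
    · rw [indicator_of_mem, indicator_of_mem, smul_eq_mul]
      · exact ⟨hmem, hp.2⟩
      · constructor
        · rw [mem_ball_zero_iff, habs]; exact hmem.2
        · rw [mem_closedBall_zero_iff, habs]
          exact fun h => absurd h (not_le.2 hmem.1)
    · rw [indicator_of_notMem, indicator_of_notMem, smul_zero]
      · exact fun h => hmem h.1
      · intro h
        apply hmem
        rcases h with ⟨h1, h2⟩
        rw [mem_ball_zero_iff, habs] at h1
        rw [mem_closedBall_zero_iff, habs] at h2
        exact ⟨not_le.1 h2, h1⟩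
  rw [setIntegral_congr_fun polarCoord.open_target.measurableSet hset,
    setIntegral_indicator hBm,
    inter_eq_self_of_subset_right (by
      rw [hB, show polarCoord.target = Set.Ioi (0:ℝ) ×ˢ Set.Ioo (-π) π from rfl]
      exact prod_mono (fun x hx => hr0.trans hx.1) subset_rfl)] at hpolar
  -- Fubini
  have hcont2 : ContinuousOn (fun p : ℝ × ℝ => p.1 * ‖f (Complex.polarCoord.symm p)‖)
      (Icc r r' ×ˢ Icc (-π) π) := by
    apply (continuous_fst.continuousOn).mul
    apply ContinuousOn.norm
    apply hcont.comp (aux_symm_cont.continuousOn)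
    intro p hp
    rw [mem_prod] at hp
    rw [mem_closedBall_zero_iff, Complex.norm_polarCoord_symm,
      abs_of_pos (lt_of_lt_of_le hr0 hp.1.1)]
    exact hp.1.2
  have hint2 : IntegrableOn (fun p : ℝ × ℝ => p.1 * ‖f (Complex.polarCoord.symm p)‖) B := by
    apply IntegrableOn.mono_set
      (hcont2.integrableOn_compact (isCompact_Icc.prod isCompact_Icc))
    exact prod_mono Ioo_subset_Icc_self Ioo_subset_Icc_self
  have hfub : ∫ p in B, p.1 * ‖f (Complex.polarCoord.symm p)‖
      = ∫ s in Ioo r r', ∫ θ in Ioo (-π) π, s * ‖f (Complex.polarCoord.symm (s, θ))‖ := by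
    rw [hB]
    rw [show (volume : Measure (ℝ × ℝ)) = (volume : Measure ℝ).prod volume from
      Measure.volume_eq_prod ℝ ℝ] at hint2 ⊢
    exact setIntegral_prod _ hint2
  -- marginal integrability
  set W : ℝ → ℝ := fun s => ∫ θ in Ioo (-π) π, s * ‖f (Complex.polarCoord.symm (s, θ))‖
    with hW
  have hWint : IntegrableOn W (Ioo r r') := by
    have h3 : Integrable (fun p : ℝ × ℝ => p.1 * ‖f (Complex.polarCoord.symm p)‖)
        ((volume.restrict (Ioo r r')).prod (volume.restrict (Ioo (-π) π))) := by
      rw [Measure.prod_restrict]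
      rw [show (volume : Measure (ℝ × ℝ)) = (volume : Measure ℝ).prod volume from
        Measure.volume_eq_prod ℝ ℝ] at hint2
      exact hint2
    exact h3.integral_prod_left
  -- pigeonhole
  have hex : ∃ s ∈ Ioo r r', W s ≤ K := by
    by_contra hcon
    push_neg at hcon
    have h4 : K * (volume (Ioo r r')).toReal ≤ ∫ s in Ioo r r', W s :=
      setIntegral_ge_of_const_le_real measurableSet_Ioo (by simp) (fun s hs => (hcon s hs).le) hWint
    rw [Real.volume_Ioo, ENNReal.toReal_ofReal hrr.le] at h4
    have h5 : ∫ s in Ioo r r', W s ≤ C := by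
      rw [← hfub, hpolar]; exact hL1
    have h6 : C / (r' - r) * (r' - r) = C := div_mul_cancel₀ _ hrr.ne'
    rw [hK] at h4
    nlinarith
  obtain ⟨s, hs, hWs⟩ := hex
  refine ⟨s, hs, ?_⟩
  have hs0 : 0 < s := hr0.trans hs.1
  have hper : Function.Periodic (fun θ => ‖f (circleMap 0 s θ)‖) (2 * π) :=
    (periodic_circleMap 0 s).comp fun z => ‖f z‖
  have hWs' : W s = s * ∫ θ in (0)..(2*π), ‖f (circleMap 0 s θ)‖ := by
    rw [hW]
    simp only [aux_symm_eq]
    rw [integral_const_mul]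
    congr 1
    have hpi := hper.intervalIntegral_add_eq (-π) 0
    rw [zero_add, show -π + 2*π = π by ring] at hpi
    rw [← hpi, intervalIntegral.integral_of_le (by linarith [Real.pi_pos] : -π ≤ π),
      integral_Ioc_eq_integral_Ioo]
  rw [← hWs']
  exact hWs

lemma aux_coeff_bound {f : ℂ → ℂ} (hf : DifferentiableOn ℂ f (ball 0 1))
    {r r' C : ℝ} (hr0 : 0 < r) (hrr' : r < r') (hr'1 : r' < 1) (hC0 : 0 ≤ C)
    (hC : ∫⁻ z in ball (0:ℂ) 1, (‖f z‖₊ : ℝ≥0∞) ∂volume ≤ ENNReal.ofReal C) (k : ℕ) :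
    ‖cauchyPowerSeries f 0 (1/2) k (fun _ => 1)‖
      ≤ (2 * π)⁻¹ * ((C / (r' - r) + 1) / r) * (r⁻¹) ^ k := by
  obtain ⟨s, hs, hWs⟩ := aux_pigeonhole hf hr0 hrr' hr'1 hC0 hC
  set K := C / (r' - r) + 1 with hK
  have hrr2 : 0 < r' - r := by linarith
  have hK0 : 0 < K := by
    have := div_nonneg hC0 hrr2.le
    rw [hK]; linarith
  have hs0 : 0 < s := hr0.trans hs.1
  have hs1 : s < 1 := hs.2.trans hr'1
  have hJ0 : 0 ≤ ∫ θ in (0)..(2*π), ‖f (circleMap 0 s θ)‖ :=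
    intervalIntegral.integral_nonneg (by linarith [Real.pi_pos]) (fun θ _ => norm_nonneg _)
  have hJ : ∫ θ in (0)..(2*π), ‖f (circleMap 0 s θ)‖ ≤ K / r := by
    have h1 : ∫ θ in (0)..(2*π), ‖f (circleMap 0 s θ)‖ ≤ K / s := by
      rw [le_div_iff₀ hs0]
      calc (∫ θ in (0)..(2*π), ‖f (circleMap 0 s θ)‖) * s
          = s * ∫ θ in (0)..(2*π), ‖f (circleMap 0 s θ)‖ := by ring
        _ ≤ K := hWs
    refine h1.trans ?_
    exact div_le_div_of_nonneg_left hK0.le hr0 hs.1.le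
  have hEq : cauchyPowerSeries f 0 (1/2) = cauchyPowerSeries f 0 s :=
    aux_series_eq hf (by norm_num) (by norm_num) hs0 hs1
  have h1 : ‖cauchyPowerSeries f 0 (1/2) k (fun _ => 1)‖
      ≤ ‖cauchyPowerSeries f 0 s k‖ := by
    rw [hEq]
    calc ‖cauchyPowerSeries f 0 s k fun _ => 1‖
        ≤ ‖cauchyPowerSeries f 0 s k‖ * ∏ _i : Fin k, ‖(1:ℂ)‖ :=
          (cauchyPowerSeries f 0 s k).le_opNorm _
      _ = ‖cauchyPowerSeries f 0 s k‖ := by simp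
  refine h1.trans ((norm_cauchyPowerSeries_le f 0 s k).trans ?_)
  rw [abs_of_pos hs0]
  have h2 : (s⁻¹) ^ k ≤ (r⁻¹) ^ k :=
    pow_le_pow_left₀ (by positivity) (inv_anti₀ hr0 hs.1.le) k
  have h3 : (2 * π)⁻¹ * ∫ θ in (0)..(2*π), ‖f (circleMap 0 s θ)‖
      ≤ (2 * π)⁻¹ * (K / r) :=
    mul_le_mul_of_nonneg_left hJ (by positivity)
  calc ((2 * π)⁻¹ * ∫ θ in (0)..(2*π), ‖f (circleMap 0 s θ)‖) * (s⁻¹) ^ k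
      ≤ ((2 * π)⁻¹ * (K / r)) * (r⁻¹) ^ k := by
        apply mul_le_mul h3 h2 (by positivity) (by positivity)
    _ = (2 * π)⁻¹ * (K / r) * (r⁻¹) ^ k := rfl






lemma aux_vol_lintegral (g : ℂ → ℝ≥0∞) :
    ∫⁻ z in ball (0:ℂ) 1, g z ∂volume
      = ENNReal.ofReal Real.pi * ∫⁻ z in ball (0:ℂ) 1, g z ∂dA := by
  rw [dA, Measure.restrict_smul, lintegral_smul_measure, smul_eq_mul, ← mul_assoc,
    ENNReal.mul_inv_cancel (by simp [Real.pi_pos]) (by simp), one_mul]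

lemma aux_L1_bound {γ : ℝ} (hγ : 0 < γ) {f : ℂ → ℂ} (hf : DifferentiableOn ℂ f (ball 0 1))
    {J : ℝ≥0∞} (hρ : rhoC γ f ≤ J) :
    ∫⁻ z in ball (0:ℂ) 1, (‖f z‖₊ : ℝ≥0∞) ∂volume
      ≤ ENNReal.ofReal (Real.exp γ) *
        ((ENNReal.ofReal Real.pi * J) ^ (1/2 : ℝ) * (volume (ball (0:ℂ) 1)) ^ (1/2 : ℝ)
          + volume (ball (0:ℂ) 1)) := by
  set w : ℂ → ℝ := fun z => Real.exp (-γ * ‖z‖ ^ 2) with hw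
  set g : ℂ → ℝ≥0∞ := fun z => ENNReal.ofReal |‖f z‖ * w z - 1| with hg
  have hgcont : ContinuousOn (fun z => |‖f z‖ * w z - 1|) (ball (0:ℂ) 1) := by
    apply ContinuousOn.abs
    apply ContinuousOn.sub _ continuousOn_const
    apply ContinuousOn.mul (continuous_norm.comp_continuousOn hf.continuousOn)
    exact (Real.continuous_exp.comp (continuous_const.mul (continuous_norm.pow 2))).continuousOn
  have hg_meas : AEMeasurable g (volume.restrict (ball (0:ℂ) 1)) :=
    ENNReal.measurable_ofReal.comp_aemeasurable
      (hgcont.aemeasurable measurableSet_ball)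
  -- the L² bound
  have hL : ∫⁻ z in ball (0:ℂ) 1, g z ^ (2:ℝ) ∂volume ≤ ENNReal.ofReal Real.pi * J := by
    have hpt : ∀ z : ℂ, g z ^ (2:ℝ)
        = ENNReal.ofReal ((‖f z‖ * w z - 1) ^ 2) := by
      intro z
      show ENNReal.ofReal |‖f z‖ * w z - 1| ^ (2:ℝ) = _
      rw [ENNReal.ofReal_rpow_of_nonneg (abs_nonneg _) (by norm_num : (0:ℝ) ≤ 2)]
      congr 1
      rw [show (2:ℝ) = ((2:ℕ):ℝ) by norm_num, Real.rpow_natCast, sq_abs]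
    simp only [hpt]
    rw [aux_vol_lintegral]
    exact mul_le_mul_right hρ _
  -- Hölder
  have hH : ∫⁻ z in ball (0:ℂ) 1, g z ∂volume
      ≤ (ENNReal.ofReal Real.pi * J) ^ (1/2 : ℝ) * (volume (ball (0:ℂ) 1)) ^ (1/2 : ℝ) := by
    have hconj : (2:ℝ).HolderConjugate 2 := Real.HolderConjugate.two_two
    have h1 := ENNReal.lintegral_mul_le_Lp_mul_Lq (volume.restrict (ball (0:ℂ) 1)) hconj
      hg_meas (aemeasurable_const (b := (1:ℝ≥0∞)))
    simp only [Pi.mul_apply, mul_one, ENNReal.one_rpow, lintegral_const,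
      Measure.restrict_apply_univ] at h1
    refine h1.trans ?_
    rw [show (1:ℝ)/2 = (2:ℝ)⁻¹ by norm_num]
    gcongr <;> first
    | exact hL
    | simp
  -- pointwise bound
  have hpt2 : ∀ z ∈ ball (0:ℂ) 1,
      (‖f z‖₊ : ℝ≥0∞) ≤ ENNReal.ofReal (Real.exp γ) * (g z + 1) := by
    intro z hz
    rw [mem_ball_zero_iff] at hz
    have hw0 : 0 < w z := Real.exp_pos _
    have habs : ‖z‖ ^ 2 ≤ 1 := by
      have h0 := norm_nonneg z
      nlinarith
    have hwe : Real.exp γ * w z ≥ 1 := by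
      rw [hw, ← Real.exp_add]
      nlinarith [Real.add_one_le_exp (γ + -γ * ‖z‖ ^ 2),
        Real.exp_pos (γ + -γ * ‖z‖ ^ 2)]
    have hreal : ‖f z‖ ≤ Real.exp γ * (|‖f z‖ * w z - 1| + 1) := by
      have h1 : ‖f z‖ * w z ≤ |‖f z‖ * w z - 1| + 1 := by
        cases abs_cases (‖f z‖ * w z - 1) <;> rename_i h <;> rw [h.1] <;> linarith
      have h2 : ‖f z‖ * (Real.exp γ * w z) ≤
          Real.exp γ * (|‖f z‖ * w z - 1| + 1) := by
        calc ‖f z‖ * (Real.exp γ * w z)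
            = Real.exp γ * (‖f z‖ * w z) := by ring
          _ ≤ Real.exp γ * (|‖f z‖ * w z - 1| + 1) := by
              apply mul_le_mul_of_nonneg_left h1 (Real.exp_pos _).le
      nlinarith [norm_nonneg (f z), Real.exp_pos γ]
    calc (‖f z‖₊ : ℝ≥0∞) = ENNReal.ofReal ‖f z‖ := (ofReal_norm _).symm
      _ ≤ ENNReal.ofReal (Real.exp γ * (|‖f z‖ * w z - 1| + 1)) :=
          ENNReal.ofReal_le_ofReal hreal
      _ = ENNReal.ofReal (Real.exp γ) * (g z + 1) := by
          rw [ENNReal.ofReal_mul (Real.exp_pos γ).le, ENNReal.ofReal_add (abs_nonneg _)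
            zero_le_one, ENNReal.ofReal_one]
  calc ∫⁻ z in ball (0:ℂ) 1, (‖f z‖₊ : ℝ≥0∞) ∂volume
      ≤ ∫⁻ z in ball (0:ℂ) 1, ENNReal.ofReal (Real.exp γ) * (g z + 1) ∂volume := by
        apply lintegral_mono_ae
        rw [ae_restrict_iff' measurableSet_ball]
        exact ae_of_all _ hpt2
    _ = ENNReal.ofReal (Real.exp γ) *
          (∫⁻ z in ball (0:ℂ) 1, g z ∂volume + volume (ball (0:ℂ) 1)) := by
        rw [lintegral_const_mul' _ _ (by simp), lintegral_add_right' _ aemeasurable_const]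
        simp
    _ ≤ _ := by
        apply mul_le_mul_right
        exact add_le_add hH le_rfl


end AuxMin

/-- for every `γ > 0` there is a holomorphic function `f₀` on `𝔻`
minimizing the planar discrepancy functional `ρ_{C,γ}`. -/
theorem planar_minimizer_exists (γ : ℝ) (hγ : 0 < γ) :
    ∃ f₀ : ℂ → ℂ, DifferentiableOn ℂ f₀ (ball 0 1) ∧
      ∀ g : ℂ → ℂ, DifferentiableOn ℂ g (ball 0 1) → rhoC γ f₀ ≤ rhoC γ g := by
  classical
  set I := ⨅ (g : ℂ → ℂ) (_ : DifferentiableOn ℂ g (ball 0 1)), rhoC γ g with hI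
  have hzero : rhoC γ (fun _ => (0:ℂ)) < ⊤ := by
    rw [rhoC]
    simp only [norm_zero, zero_mul, zero_sub, neg_one_sq, ENNReal.ofReal_one]
    rw [lintegral_one, Measure.restrict_apply_univ, dA, Measure.smul_apply, smul_eq_mul]
    exact ENNReal.mul_lt_top (ENNReal.inv_lt_top.2 (by simp [Real.pi_pos])) measure_ball_lt_top
  have hItop : I ≠ ⊤ := by
    apply ne_top_of_le_ne_top hzero.ne
    exact iInf₂_le (fun _ : ℂ => (0:ℂ)) (differentiableOn_const 0)
  have hseq : ∀ n : ℕ, ∃ g : ℂ → ℂ, DifferentiableOn ℂ g (ball 0 1) ∧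
      rhoC γ g < I + ((n:ℝ≥0∞) + 1)⁻¹ := by
    intro n
    have hlt : I < I + ((n:ℝ≥0∞)+1)⁻¹ := ENNReal.lt_add_right hItop (by simp)
    by_contra hcon
    push_neg at hcon
    have h2 : I + ((n:ℝ≥0∞)+1)⁻¹ ≤ I := le_iInf₂ fun g hg => hcon g hg
    exact absurd (h2.trans_lt hlt) (lt_irrefl _)
  choose F hFd hFlt using hseq
  have hFle : ∀ n, rhoC γ (F n) ≤ I + 1 := by
    intro n
    refine (hFlt n).le.trans (add_le_add_right ?_ I)
    exact ENNReal.inv_le_one.2 le_add_self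
  set V := volume (ball (0:ℂ) 1) with hV
  set CE : ℝ≥0∞ := ENNReal.ofReal (Real.exp γ) *
      ((ENNReal.ofReal Real.pi * (I+1)) ^ (1/2:ℝ) * V ^ (1/2:ℝ) + V) with hCE
  have hVtop : V ≠ ⊤ := measure_ball_lt_top.ne
  have hCEtop : CE ≠ ⊤ := by
    apply ENNReal.mul_ne_top ENNReal.ofReal_ne_top
    apply ENNReal.add_ne_top.2 ⟨?_, hVtop⟩
    exact ENNReal.mul_ne_top
      (ENNReal.rpow_ne_top_of_nonneg (by norm_num)
        (ENNReal.mul_ne_top ENNReal.ofReal_ne_top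
          (ENNReal.add_ne_top.2 ⟨hItop, ENNReal.one_ne_top⟩)))
      (ENNReal.rpow_ne_top_of_nonneg (by norm_num) hVtop)
  set C : ℝ := CE.toReal with hC
  have hC0 : 0 ≤ C := ENNReal.toReal_nonneg
  have hCb : ∀ n, ∫⁻ z in ball (0:ℂ) 1, (‖F n z‖₊ : ℝ≥0∞) ∂volume ≤ ENNReal.ofReal C := by
    intro n
    rw [hC, ENNReal.ofReal_toReal hCEtop]
    exact aux_L1_bound hγ (hFd n) (hFle n)
  set Cb : ℝ → ℝ → ℝ := fun r r' => (2*Real.pi)⁻¹ * ((C/(r'-r)+1)/r) with hCbdef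
  have hcoeff : ∀ (n : ℕ) (r r' : ℝ), 0 < r → r < r' → r' < 1 → ∀ k,
      ‖myCoeff (F n) k‖ ≤ Cb r r' * (r⁻¹)^k := fun n r r' h1 h2 h3 k =>
    aux_coeff_bound (hFd n) h1 h2 h3 hC0 (hCb n) k
  obtain ⟨L, hLmem, φ, hφ, hconv⟩ :=
    (isCompact_univ_pi (fun k : ℕ =>
        isCompact_closedBall (0:ℂ) (Cb (1/2) (3/4) * ((1/2:ℝ)⁻¹)^k))).isSeqCompact
      (x := fun n => fun k => myCoeff (F n) k)
      (fun n => mem_univ_pi.2 fun k => by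
        rw [mem_closedBall_zero_iff]
        exact hcoeff n _ _ (by norm_num) (by norm_num) (by norm_num) k)
  have hck : ∀ k, Tendsto (fun j => myCoeff (F (φ j)) k) atTop (𝓝 (L k)) := by
    intro k
    have := tendsto_pi_nhds.1 hconv k
    exact this
  have hLb : ∀ (r r' : ℝ), 0 < r → r < r' → r' < 1 → ∀ k, ‖L k‖ ≤ Cb r r' * (r⁻¹)^k := by
    intro r r' h1 h2 h3 k
    apply le_of_tendsto (hck k).norm
    exact Eventually.of_forall fun j => hcoeff (φ j) r r' h1 h2 h3 k
  set f₀ : ℂ → ℂ := fun z => ∑' k, L k * z ^ k with hf₀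
  have hdiffρ : ∀ ρ : ℝ, 0 < ρ → ρ < 1 → DifferentiableOn ℂ f₀ (ball (0:ℂ) ρ) := by
    intro ρ hρ0 hρ1
    set r := (ρ+1)/2 with hrdef
    set r' := (r+1)/2 with hr'def
    have hr0 : 0 < r := by rw [hrdef]; linarith
    have hρr : ρ < r := by rw [hrdef]; linarith
    have hr1 : r < 1 := by rw [hrdef]; linarith
    have hrr' : r < r' := by rw [hr'def]; linarith
    have hr'1 : r' < 1 := by rw [hr'def]; linarith
    have hTU : TendstoUniformlyOn (fun N (x : ℂ) => ∑ k ∈ Finset.range N, L k * x ^ k)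
        (fun x => ∑' k, L k * x ^ k) atTop (ball (0:ℂ) ρ) := by
      apply tendstoUniformlyOn_tsum_nat (u := fun k => Cb r r' * (ρ/r)^k)
      · apply Summable.mul_left
        apply summable_geometric_of_lt_one (by positivity)
        rw [div_lt_one hr0]; exact hρr
      · intro k x hx
        rw [mem_ball_zero_iff] at hx
        calc ‖L k * x ^ k‖ = ‖L k‖ * ‖x‖^k := by rw [norm_mul, norm_pow]
          _ ≤ (Cb r r' * (r⁻¹)^k) * ρ^k := by
              apply mul_le_mul (hLb r r' hr0 hrr' hr'1 k)
                (pow_le_pow_left₀ (norm_nonneg _) hx.le k) (by positivity)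
              have := hLb r r' hr0 hrr' hr'1 k
              exact le_trans (norm_nonneg _) this
          _ = Cb r r' * (ρ/r)^k := by
              rw [mul_assoc, ← mul_pow, inv_mul_eq_div]
    have hdiffN : ∀ᶠ N in (atTop : Filter ℕ),
        DifferentiableOn ℂ (fun x : ℂ => ∑ k ∈ Finset.range N, L k * x ^ k)
          (ball (0:ℂ) ρ) := by
      apply Eventually.of_forall
      intro N
      apply Differentiable.differentiableOn
      apply Differentiable.fun_sum
      intro i _
      exact (differentiable_const (L i)).mul (differentiable_pow i)
    exact hTU.tendstoLocallyUniformlyOn.differentiableOn hdiffN isOpen_ball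
  have hdiff : DifferentiableOn ℂ f₀ (ball (0:ℂ) 1) := by
    intro z hz
    rw [mem_ball_zero_iff] at hz
    have h0 := norm_nonneg z
    have hmem : z ∈ ball (0:ℂ) ((‖z‖+1)/2) := mem_ball_zero_iff.2 (by linarith)
    exact ((hdiffρ ((‖z‖+1)/2) (by linarith) (by linarith)).differentiableAt
      (isOpen_ball.mem_nhds hmem)).differentiableWithinAt
  have hptw : ∀ z ∈ ball (0:ℂ) 1, Tendsto (fun j => F (φ j) z) atTop (𝓝 (f₀ z)) := by
    intro z hz
    rw [mem_ball_zero_iff] at hz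
    have h0 := norm_nonneg z
    set r := (‖z‖+1)/2 with hrdef
    set r' := (r+1)/2 with hr'def
    have hr0 : 0 < r := by rw [hrdef]; linarith
    have hzr : ‖z‖ < r := by rw [hrdef]; linarith
    have hr1 : r < 1 := by rw [hrdef]; linarith
    have hrr' : r < r' := by rw [hr'def]; linarith
    have hr'1 : r' < 1 := by rw [hr'def]; linarith
    have hTT := tendsto_tsum_of_dominated_convergence
      (f := fun (j : ℕ) (k : ℕ) => myCoeff (F (φ j)) k * z ^ k)
      (g := fun k => L k * z ^ k)
      (bound := fun k => Cb r r' * (‖z‖/r)^k)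
      (by
        apply Summable.mul_left
        apply summable_geometric_of_lt_one (by positivity)
        rw [div_lt_one hr0]; exact hzr)
      (fun k => (hck k).mul_const _)
      (Eventually.of_forall fun j => by
        intro k
        calc ‖myCoeff (F (φ j)) k * z ^ k‖ = ‖myCoeff (F (φ j)) k‖ * ‖z‖^k := by
              rw [norm_mul, norm_pow]
          _ ≤ (Cb r r' * (r⁻¹)^k) * ‖z‖^k := by
              apply mul_le_mul_of_nonneg_right (hcoeff (φ j) r r' hr0 hrr' hr'1 k)
                (by positivity)
          _ = Cb r r' * (‖z‖/r)^k := by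
              rw [mul_assoc, ← mul_pow, inv_mul_eq_div])
    have heq : (fun j => F (φ j) z) = fun j => ∑' k, myCoeff (F (φ j)) k * z ^ k :=
      funext fun j => ((aux_hasSum (hFd (φ j)) hz).tsum_eq).symm
    rw [heq]
    exact hTT
  refine ⟨f₀, hdiff, fun g hg => le_trans ?_
    (iInf₂_le (f := fun (g : ℂ → ℂ) (_ : DifferentiableOn ℂ g (ball 0 1)) => rhoC γ g) g hg)⟩
  have hmeas : ∀ n : ℕ, AEMeasurable (fun z =>
      ENNReal.ofReal ((‖F n z‖ * Real.exp (-γ * ‖z‖ ^ 2) - 1) ^ 2))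
      (dA.restrict (ball 0 1)) := by
    intro n
    have hcont : ContinuousOn (fun z =>
        (‖F n z‖ * Real.exp (-γ * ‖z‖ ^ 2) - 1) ^ 2) (ball (0:ℂ) 1) := by
      apply ContinuousOn.pow
      apply ContinuousOn.sub _ continuousOn_const
      exact (continuous_norm.comp_continuousOn (hFd n).continuousOn).mul
        (Real.continuous_exp.comp (continuous_const.mul (continuous_norm.pow 2))).continuousOn
    have h5 : AEMeasurable (fun z =>
        ENNReal.ofReal ((‖F n z‖ * Real.exp (-γ * ‖z‖ ^ 2) - 1) ^ 2))
        (volume.restrict (ball 0 1)) :=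
      (ENNReal.continuous_ofReal.comp_continuousOn hcont).aemeasurable measurableSet_ball
    rw [dA, Measure.restrict_smul]
    exact h5.smul_measure _
  have hG : ∀ z ∈ ball (0:ℂ) 1,
      Tendsto (fun j => ENNReal.ofReal
          ((‖F (φ j) z‖ * Real.exp (-γ * ‖z‖ ^ 2) - 1) ^ 2)) atTop
        (𝓝 (ENNReal.ofReal ((‖f₀ z‖ * Real.exp (-γ * ‖z‖ ^ 2) - 1) ^ 2))) := by
    intro z hz
    apply (ENNReal.continuous_ofReal.tendsto _).comp
    apply Filter.Tendsto.pow
    apply Filter.Tendsto.sub_const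
    apply Filter.Tendsto.mul_const
    exact (continuous_norm.tendsto _).comp (hptw z hz)
  calc rhoC γ f₀
      = ∫⁻ z in ball (0:ℂ) 1, liminf (fun j => ENNReal.ofReal
          ((‖F (φ j) z‖ * Real.exp (-γ * ‖z‖ ^ 2) - 1) ^ 2)) atTop ∂dA := by
        apply lintegral_congr_ae
        rw [EventuallyEq, ae_restrict_iff' measurableSet_ball]
        exact ae_of_all _ fun z hz => ((hG z hz).liminf_eq).symm
    _ ≤ liminf (fun j => rhoC γ (F (φ j))) atTop := lintegral_liminf_le' (fun j => hmeas (φ j))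
    _ ≤ I := by
      have hle : ∀ j, rhoC γ (F (φ j)) ≤ I + ((j:ℝ≥0∞)+1)⁻¹ := by
        intro j
        refine (hFlt (φ j)).le.trans (add_le_add_right ?_ I)
        apply ENNReal.inv_le_inv.2
        exact add_le_add_left (Nat.cast_le.2 hφ.le_apply) 1
      have h00 : Tendsto (fun j : ℕ => ((j:ℝ≥0∞)+1)⁻¹) atTop (𝓝 0) := by
        apply tendsto_of_tendsto_of_tendsto_of_le_of_le tendsto_const_nhds
          ENNReal.tendsto_inv_nat_nhds_zero (fun j => zero_le) (fun j => ?_)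
        exact ENNReal.inv_le_inv.2 le_self_add
      have htend : Tendsto (fun j : ℕ => I + ((j:ℝ≥0∞)+1)⁻¹) atTop (𝓝 I) := by
        simpa using tendsto_const_nhds.add h00
      calc liminf (fun j => rhoC γ (F (φ j))) atTop
          ≤ liminf (fun j : ℕ => I + ((j:ℝ≥0∞)+1)⁻¹) atTop :=
            liminf_le_liminf (Eventually.of_forall hle)
        _ = I := htend.liminf_eq
end

section
/- If γ > 0 and f is a minimizer of ρ_{C,γ}, then ∫_𝔻 |f(z)|² e^{−2γ|z|²} dA(z) = ∫_𝔻 |f(z)| e^{−γ|z|²} dA(z), and this common value is at most 1. -/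
open MeasureTheory Filter Set Metric Polynomial
open scoped ENNReal Topology NNReal

/-- if `γ > 0` and `f` is a minimizer of `ρ_{C,γ}`, then
`∫_𝔻 |f|² e^{-2γ|z|²} dA = ∫_𝔻 |f| e^{-γ|z|²} dA`, and this common value is at most 1. -/
theorem planar_variational_identity (γ : ℝ) (hγ : 0 < γ) (f : ℂ → ℂ) (hf : IsMinC γ f) :
    (∫⁻ z in ball (0:ℂ) 1, ENNReal.ofReal
        (‖f z‖ ^ 2 * Real.exp (-(2 * γ) * ‖z‖ ^ 2)) ∂dA)
      = (∫⁻ z in ball (0:ℂ) 1, ENNReal.ofReal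
        (‖f z‖ * Real.exp (-γ * ‖z‖ ^ 2)) ∂dA) ∧
    (∫⁻ z in ball (0:ℂ) 1, ENNReal.ofReal
        (‖f z‖ * Real.exp (-γ * ‖z‖ ^ 2)) ∂dA) ≤ 1 := by
  obtain ⟨hfd, hmin⟩ := hf
  set h : ℂ → ℝ := fun z => ‖f z‖ * Real.exp (-γ * ‖z‖ ^ 2) with hh
  have hpos : ∀ z, 0 ≤ h z := fun z =>
    mul_nonneg (norm_nonneg _) (Real.exp_pos _).le
  have hmeas : AEMeasurable h (dA.restrict (ball (0:ℂ) 1)) := by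
    refine ContinuousOn.aemeasurable ?_ measurableSet_ball
    exact (continuous_norm.comp_continuousOn hfd.continuousOn).mul
      ((Real.continuous_exp.comp
        (continuous_const.mul (continuous_norm.pow 2))).continuousOn)
  have hM : dA (ball (0:ℂ) 1) = 1 := by
    have hπ : (NNReal.pi : ℝ≥0∞) = ENNReal.ofReal Real.pi := by
      rw [← NNReal.coe_real_pi, ENNReal.ofReal_coe_nnreal]
    rw [dA, Measure.smul_apply, smul_eq_mul, Complex.volume_ball, hπ,
      ENNReal.ofReal_one, one_pow, one_mul]
    exact ENNReal.inv_mul_cancel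
      ((ENNReal.ofReal_pos.mpr Real.pi_pos).ne') ENNReal.ofReal_ne_top
  set A : ℝ≥0∞ := ∫⁻ z in ball (0:ℂ) 1, ENNReal.ofReal ((h z) ^ 2) ∂dA with hA
  set B : ℝ≥0∞ := ∫⁻ z in ball (0:ℂ) 1, ENNReal.ofReal (h z) ∂dA with hB
  set R : ℝ → ℝ≥0∞ :=
    fun t => ∫⁻ z in ball (0:ℂ) 1, ENNReal.ofReal ((t * h z - 1) ^ 2) ∂dA with hR
  have mRt : ∀ t : ℝ, AEMeasurable (fun z => ENNReal.ofReal ((t * h z - 1) ^ 2))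
      (dA.restrict (ball (0:ℂ) 1)) := fun t =>
    (((hmeas.const_mul t).sub aemeasurable_const).pow_const 2).ennreal_ofReal
  have hRf : rhoC γ f = R 1 := by
    refine lintegral_congr fun z => ?_
    simp only [hh, one_mul]
  have hRt : ∀ t : ℝ, 0 < t → rhoC γ (fun z => (t : ℂ) * f z) = R t := by
    intro t ht
    refine lintegral_congr fun z => ?_
    simp only [hh, norm_mul, Complex.norm_real, Real.norm_eq_abs, abs_of_pos ht]
    congr 1
    ring
  have hmin' : ∀ t : ℝ, 0 < t → R 1 ≤ R t := by
    intro t ht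
    rw [← hRf, ← hRt t ht]
    exact hmin _ ((differentiableOn_const _).mul hfd)
  have hR1le : R 1 ≤ 1 := by
    rw [← hRf]
    have h0 : rhoC γ (fun _ => (0 : ℂ)) = 1 := by
      have : rhoC γ (fun _ => (0 : ℂ)) = ∫⁻ _ in ball (0:ℂ) 1, 1 ∂dA := by
        refine lintegral_congr fun z => ?_
        norm_num [rhoC]
      rw [this, setLIntegral_one, hM]
    rw [← h0]
    exact hmin _ (differentiableOn_const _)
  -- key algebraic identity
  have step : ∀ t : ℝ, 0 < t →
      R t + ENNReal.ofReal (2 * t) * B = ENNReal.ofReal (t ^ 2) * A + 1 := by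
    intro t ht
    have e1 : ENNReal.ofReal (2 * t) * B
        = ∫⁻ z in ball (0:ℂ) 1, ENNReal.ofReal (2 * t * h z) ∂dA := by
      rw [hB, ← lintegral_const_mul' _ _ ENNReal.ofReal_ne_top]
      exact lintegral_congr fun z => (ENNReal.ofReal_mul (by positivity)).symm
    have e2 : ENNReal.ofReal (t ^ 2) * A
        = ∫⁻ z in ball (0:ℂ) 1, ENNReal.ofReal (t ^ 2 * (h z) ^ 2) ∂dA := by
      rw [hA, ← lintegral_const_mul' _ _ ENNReal.ofReal_ne_top]
      exact lintegral_congr fun z => (ENNReal.ofReal_mul (by positivity)).symm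
    rw [e1, e2, hR, ← lintegral_add_left' (mRt t)]
    have e3 : ∀ z : ℂ, ENNReal.ofReal ((t * h z - 1) ^ 2) + ENNReal.ofReal (2 * t * h z)
        = ENNReal.ofReal (t ^ 2 * (h z) ^ 2) + 1 := by
      intro z
      rw [← ENNReal.ofReal_add (by positivity) (by positivity), ← ENNReal.ofReal_one,
        ← ENNReal.ofReal_add (by positivity) zero_le_one]
      congr 1
      ring
    rw [lintegral_congr e3,
      lintegral_add_left' (((hmeas.pow_const 2).const_mul (t ^ 2)).ennreal_ofReal),
      setLIntegral_one, hM]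
  -- finiteness
  have hAne : A ≠ ⊤ := by
    have hle : A ≤ 2 * R 1 + 2 := by
      rw [hA, hR]
      have : ∀ z : ℂ, ENNReal.ofReal ((h z) ^ 2)
          ≤ 2 * ENNReal.ofReal ((1 * h z - 1) ^ 2) + 2 := by
        intro z
        have h1 : (h z) ^ 2 ≤ 2 * (1 * h z - 1) ^ 2 + 2 := by nlinarith [sq_nonneg (h z - 2), hpos z]
        calc ENNReal.ofReal ((h z) ^ 2)
            ≤ ENNReal.ofReal (2 * (1 * h z - 1) ^ 2 + 2) := ENNReal.ofReal_le_ofReal h1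
          _ = 2 * ENNReal.ofReal ((1 * h z - 1) ^ 2) + 2 := by
              rw [ENNReal.ofReal_add (by positivity) (by norm_num),
                ENNReal.ofReal_mul (by norm_num)]
              norm_num
      calc (∫⁻ z in ball (0:ℂ) 1, ENNReal.ofReal ((h z) ^ 2) ∂dA)
          ≤ ∫⁻ z in ball (0:ℂ) 1,
              (2 * ENNReal.ofReal ((1 * h z - 1) ^ 2) + 2) ∂dA := lintegral_mono this
        _ = 2 * (∫⁻ z in ball (0:ℂ) 1, ENNReal.ofReal ((1 * h z - 1) ^ 2) ∂dA) + 2 := by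
            rw [lintegral_add_left' ((mRt 1).const_mul 2), setLIntegral_const,
              lintegral_const_mul' _ _ (by norm_num), hM, mul_one]
        _ ≤ 2 * R 1 + 2 := by rw [hR]
    have h4 : (2 : ℝ≥0∞) * R 1 + 2 ≤ 2 * 1 + 2 :=
      add_le_add_left (mul_le_mul_right hR1le 2) 2
    exact ne_top_of_le_ne_top (by norm_num) (hle.trans h4)
  have hBne : B ≠ ⊤ := by
    have hle : B ≤ A + 1 := by
      rw [hA, hB]
      have : ∀ z : ℂ, ENNReal.ofReal (h z)
          ≤ ENNReal.ofReal ((h z) ^ 2) + 1 := by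
        intro z
        rw [← ENNReal.ofReal_one, ← ENNReal.ofReal_add (by positivity) zero_le_one]
        exact ENNReal.ofReal_le_ofReal (by nlinarith [hpos z])
      calc (∫⁻ z in ball (0:ℂ) 1, ENNReal.ofReal (h z) ∂dA)
          ≤ ∫⁻ z in ball (0:ℂ) 1, (ENNReal.ofReal ((h z) ^ 2) + 1) ∂dA :=
            lintegral_mono this
        _ = (∫⁻ z in ball (0:ℂ) 1, ENNReal.ofReal ((h z) ^ 2) ∂dA) + 1 := by
            rw [lintegral_add_left' ((hmeas.pow_const 2).ennreal_ofReal),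
              setLIntegral_one, hM]
    exact ne_top_of_le_ne_top (by simp [hAne, ENNReal.add_ne_top]) hle
  have hRtne : ∀ t : ℝ, 0 < t → R t ≠ ⊤ := by
    intro t ht
    have : R t ≤ ENNReal.ofReal (t ^ 2) * A + 1 := by
      rw [← step t ht]; exact le_self_add
    exact ne_top_of_le_ne_top
      (by simp [ENNReal.add_ne_top, ENNReal.mul_ne_top, ENNReal.ofReal_ne_top, hAne]) this
  -- pass to real numbers
  set a : ℝ := A.toReal with ha
  set b : ℝ := B.toReal with hb
  have ha0 : 0 ≤ a := ENNReal.toReal_nonneg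
  have hb0 : 0 ≤ b := ENNReal.toReal_nonneg
  have hreal : ∀ t : ℝ, 0 < t → (R t).toReal + 2 * t * b = t ^ 2 * a + 1 := by
    intro t ht
    have := congrArg ENNReal.toReal (step t ht)
    rwa [ENNReal.toReal_add (hRtne t ht) (ENNReal.mul_ne_top ENNReal.ofReal_ne_top hBne),
      ENNReal.toReal_add (ENNReal.mul_ne_top ENNReal.ofReal_ne_top hAne) ENNReal.one_ne_top,
      ENNReal.toReal_mul, ENNReal.toReal_mul,
      ENNReal.toReal_ofReal (by positivity), ENNReal.toReal_ofReal (by positivity),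
      ENNReal.toReal_one] at this
  have hineq : ∀ t : ℝ, 0 < t → 2 * (t - 1) * b ≤ (t ^ 2 - 1) * a := by
    intro t ht
    have h1 := hreal 1 one_pos
    have h2 := hreal t ht
    have h3 : (R 1).toReal ≤ (R t).toReal :=
      (ENNReal.toReal_le_toReal (hRtne 1 one_pos) (hRtne t ht)).mpr (hmin' t ht)
    nlinarith
  -- a = b
  have hab : a = b := by
    rcases lt_trichotomy a b with hlt | heq | hgt
    · exfalso
      set δ : ℝ := (b - a) / (a + 1) with hδdef
      have hδpos : 0 < δ := div_pos (by linarith) (by linarith)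
      have hδmul : δ * (a + 1) = b - a := div_mul_cancel₀ _ (by linarith)
      have hk := hineq (1 + δ) (by linarith)
      nlinarith
    · exact heq
    · exfalso
      set δ : ℝ := (a - b) / (a + 1) with hδdef
      have hδpos : 0 < δ := div_pos (by linarith) (by linarith)
      have hδlt : δ < 1 := by
        rw [hδdef, div_lt_one (by linarith)]; linarith
      have hδmul : δ * (a + 1) = a - b := div_mul_cancel₀ _ (by linarith)
      have hk := hineq (1 - δ) (by linarith)
      nlinarith
  have hble : b ≤ 1 := by
    have h1 := hreal 1 one_pos
    have h2 : 0 ≤ (R 1).toReal := ENNReal.toReal_nonneg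
    nlinarith
  -- conclude
  have goal1 : (∫⁻ z in ball (0:ℂ) 1, ENNReal.ofReal
      (‖f z‖ ^ 2 * Real.exp (-(2 * γ) * ‖z‖ ^ 2)) ∂dA) = A := by
    rw [hA]
    refine lintegral_congr fun z => ?_
    congr 1
    rw [hh]
    have : Real.exp (-γ * ‖z‖ ^ 2) ^ 2
        = Real.exp (-(2 * γ) * ‖z‖ ^ 2) := by
      rw [sq, ← Real.exp_add]
      congr 1
      ring
    rw [mul_pow, this]
  have goal2 : (∫⁻ z in ball (0:ℂ) 1, ENNReal.ofReal
      (‖f z‖ * Real.exp (-γ * ‖z‖ ^ 2)) ∂dA) = B := rfl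
  constructor
  · rw [goal1]
    exact (ENNReal.toReal_eq_toReal_iff' hAne hBne).mp hab
  · have : B.toReal ≤ (1 : ℝ≥0∞).toReal := by simpa using hble
    exact (ENNReal.toReal_le_toReal hBne ENNReal.one_ne_top).mp this
end

section
/- If γ > 0 and f is a minimizer of ρ_{C,γ}, then ρ_{C,γ}(f) = 1 − ∫_𝔻 |f(z)| e^{−γ|z|²} dA(z). -/
open MeasureTheory Filter Set Metric Polynomial
open scoped ENNReal Topology NNReal

lemma aux_min_planar (μ : Measure ℂ) (hμuniv : μ univ = 1) (φ : ℂ → ℝ)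
    (hφ0 : ∀ z, 0 ≤ φ z) (hφm : AEMeasurable φ μ)
    (hmin : ∀ t : ℝ, 0 ≤ t →
      (∫⁻ z, ENNReal.ofReal ((φ z - 1) ^ 2) ∂μ) ≤ ∫⁻ z, ENNReal.ofReal ((t * φ z - 1) ^ 2) ∂μ) :
    (∫⁻ z, ENNReal.ofReal ((φ z - 1) ^ 2) ∂μ) = 1 - ∫⁻ z, ENNReal.ofReal (φ z) ∂μ := by
  set A := ∫⁻ z, ENNReal.ofReal (φ z ^ 2) ∂μ with hA
  set B := ∫⁻ z, ENNReal.ofReal (φ z) ∂μ with hB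
  have hφmE : AEMeasurable (fun z => ENNReal.ofReal (φ z)) μ :=
    ENNReal.measurable_ofReal.comp_aemeasurable hφm
  have hR1 : (∫⁻ z, ENNReal.ofReal ((φ z - 1) ^ 2) ∂μ)
      = ∫⁻ z, ENNReal.ofReal ((1 * φ z - 1) ^ 2) ∂μ := by simp only [one_mul]
  have expand : ∀ t : ℝ, 0 ≤ t →
      (∫⁻ z, ENNReal.ofReal ((t * φ z - 1) ^ 2) ∂μ) + ENNReal.ofReal (2 * t) * B
        = ENNReal.ofReal (t ^ 2) * A + 1 := by
    intro t ht
    have e1 : ∫⁻ z, ENNReal.ofReal (2 * t * φ z) ∂μ = ENNReal.ofReal (2 * t) * B := by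
      simp_rw [ENNReal.ofReal_mul (by positivity : (0:ℝ) ≤ 2 * t)]
      rw [hB]
      exact lintegral_const_mul' _ _ ENNReal.ofReal_ne_top
    have e2 : ∫⁻ z, ENNReal.ofReal (t ^ 2 * φ z ^ 2) ∂μ = ENNReal.ofReal (t ^ 2) * A := by
      simp_rw [ENNReal.ofReal_mul (sq_nonneg t)]
      rw [hA]
      exact lintegral_const_mul' _ _ ENNReal.ofReal_ne_top
    have e1m : AEMeasurable (fun z => ENNReal.ofReal (2 * t * φ z)) μ :=
      ENNReal.measurable_ofReal.comp_aemeasurable (hφm.const_mul _)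
    rw [← e1, ← lintegral_add_right' _ e1m]
    have hpt : ∀ z, ENNReal.ofReal ((t * φ z - 1) ^ 2) + ENNReal.ofReal (2 * t * φ z)
        = ENNReal.ofReal (t ^ 2 * φ z ^ 2) + 1 := by
      intro z
      rw [← ENNReal.ofReal_one,
        ← ENNReal.ofReal_add (sq_nonneg _) (mul_nonneg (mul_nonneg zero_le_two ht) (hφ0 z)),
        ← ENNReal.ofReal_add (by positivity) zero_le_one]
      congr 1
      ring
    simp_rw [hpt]
    rw [lintegral_add_right _ measurable_const, lintegral_one, hμuniv, e2]
  have hF1le : (∫⁻ z, ENNReal.ofReal ((φ z - 1) ^ 2) ∂μ) ≤ 1 := by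
    have h0 := hmin 0 le_rfl
    simp only [zero_mul, zero_sub, neg_one_sq, ENNReal.ofReal_one, lintegral_one, hμuniv] at h0
    exact h0
  have hB3 : B ≤ 3 := by
    have hpt : ∀ z, ENNReal.ofReal (φ z)
        ≤ ENNReal.ofReal ((φ z - 1) ^ 2) + ENNReal.ofReal 2 := by
      intro z
      rw [← ENNReal.ofReal_add (sq_nonneg _) (by norm_num)]
      exact ENNReal.ofReal_le_ofReal (by nlinarith [hφ0 z, sq_nonneg (φ z - 1)])
    calc B ≤ ∫⁻ z, (ENNReal.ofReal ((φ z - 1) ^ 2) + ENNReal.ofReal 2) ∂μ :=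
          lintegral_mono hpt
      _ = (∫⁻ z, ENNReal.ofReal ((φ z - 1) ^ 2) ∂μ) + ENNReal.ofReal 2 * μ univ := by
          rw [lintegral_add_right _ measurable_const, lintegral_const]
      _ ≤ 1 + ENNReal.ofReal 2 * 1 := by
          rw [hμuniv]; exact add_le_add_left hF1le _
      _ ≤ 3 := by
          rw [mul_one]
          norm_num [ENNReal.ofReal_ofNat]
  have hBne : B ≠ ⊤ := ne_top_of_le_ne_top (by norm_num) hB3
  have hAne : A ≠ ⊤ := by
    have h1 := expand 1 zero_le_one
    simp only [one_pow, mul_one, ENNReal.ofReal_one, one_mul] at h1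
    have hfin : (∫⁻ z, ENNReal.ofReal ((1 * φ z - 1) ^ 2) ∂μ) + ENNReal.ofReal 2 * B ≠ ⊤ := by
      apply ENNReal.add_ne_top.2
      refine ⟨ne_top_of_le_ne_top ENNReal.one_ne_top ?_, ENNReal.mul_ne_top ENNReal.ofReal_ne_top hBne⟩
      rw [← hR1]; exact hF1le
    rw [← hR1] at hfin
    rw [h1] at hfin
    exact (ENNReal.add_ne_top.1 hfin).1
  have hFt : ∀ t : ℝ, 0 ≤ t → (∫⁻ z, ENNReal.ofReal ((t * φ z - 1) ^ 2) ∂μ) ≠ ⊤ := by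
    intro t ht
    refine ne_top_of_le_ne_top (b := ENNReal.ofReal (t ^ 2) * A + 1) ?_ ?_
    · exact ENNReal.add_ne_top.2 ⟨ENNReal.mul_ne_top ENNReal.ofReal_ne_top hAne, ENNReal.one_ne_top⟩
    · rw [← expand t ht]; exact le_self_add
  set a := A.toReal with ha'
  set b := B.toReal with hb'
  have ha0 : 0 ≤ a := ENNReal.toReal_nonneg
  have hb0 : 0 ≤ b := ENNReal.toReal_nonneg
  have rq : ∀ t : ℝ, 0 ≤ t →
      (∫⁻ z, ENNReal.ofReal ((t * φ z - 1) ^ 2) ∂μ).toReal = t ^ 2 * a - 2 * t * b + 1 := by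
    intro t ht
    have h := congrArg ENNReal.toReal (expand t ht)
    rw [ENNReal.toReal_add (hFt t ht) (ENNReal.mul_ne_top ENNReal.ofReal_ne_top hBne),
      ENNReal.toReal_add (ENNReal.mul_ne_top ENNReal.ofReal_ne_top hAne) ENNReal.one_ne_top,
      ENNReal.toReal_mul, ENNReal.toReal_mul, ENNReal.toReal_ofReal (by positivity),
      ENNReal.toReal_ofReal (sq_nonneg t), ENNReal.toReal_one] at h
    linarith [h]
  have hmin' : ∀ t : ℝ, 0 ≤ t → 1 ^ 2 * a - 2 * 1 * b + 1 ≤ t ^ 2 * a - 2 * t * b + 1 := by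
    intro t ht
    rw [← rq 1 zero_le_one, ← rq t ht]
    exact ENNReal.toReal_le_toReal (hFt 1 zero_le_one) (hFt t ht) |>.2
      (by rw [← hR1]; exact hmin t ht)
  have key : ∀ ε : ℝ, 0 < ε → ε ≤ 1 → (2 - ε) * a ≤ 2 * b ∧ 2 * b ≤ (2 + ε) * a := by
    intro ε hε hε1
    constructor
    · have h := hmin' (1 - ε) (by linarith)
      nlinarith
    · have h := hmin' (1 + ε) (by linarith)
      nlinarith
  have hab : a = b := by
    rcases lt_trichotomy a b with h | h | h
    · exfalso
      set ε := min 1 ((2 * b - 2 * a) / (2 * (a + 1))) with hε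
      have hε0 : 0 < ε := lt_min one_pos (div_pos (by linarith) (by linarith))
      have hε1 : ε ≤ 1 := min_le_left _ _
      have h4 : ε ≤ (2 * b - 2 * a) / (2 * (a + 1)) := min_le_right _ _
      have h3 := (key ε hε0 hε1).2
      have h5 : ε * (a + 1) ≤ (2 * b - 2 * a) / 2 := by
        calc ε * (a + 1) ≤ ((2 * b - 2 * a) / (2 * (a + 1))) * (a + 1) :=
              mul_le_mul_of_nonneg_right h4 (by linarith)
          _ = (2 * b - 2 * a) / 2 := by field_simp
      nlinarith
    · exact h
    · exfalso
      set ε := min 1 ((2 * a - 2 * b) / (2 * (a + 1))) with hε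
      have hε0 : 0 < ε := lt_min one_pos (div_pos (by linarith) (by linarith))
      have hε1 : ε ≤ 1 := min_le_left _ _
      have h4 : ε ≤ (2 * a - 2 * b) / (2 * (a + 1)) := min_le_right _ _
      have h3 := (key ε hε0 hε1).1
      have h5 : ε * (a + 1) ≤ (2 * a - 2 * b) / 2 := by
        calc ε * (a + 1) ≤ ((2 * a - 2 * b) / (2 * (a + 1))) * (a + 1) :=
              mul_le_mul_of_nonneg_right h4 (by linarith)
          _ = (2 * a - 2 * b) / 2 := by field_simp
      nlinarith
  have hb1 : b ≤ 1 := by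
    have h := rq 1 zero_le_one
    have h0 : (0:ℝ) ≤ (∫⁻ z, ENNReal.ofReal ((1 * φ z - 1) ^ 2) ∂μ).toReal :=
      ENNReal.toReal_nonneg
    rw [h] at h0
    nlinarith [hab]
  rw [hR1, ← ENNReal.ofReal_toReal (hFt 1 zero_le_one), rq 1 zero_le_one]
  have : 1 ^ 2 * a - 2 * 1 * b + 1 = 1 - b := by rw [hab]; ring
  rw [this, ENNReal.ofReal_sub _ hb0, ENNReal.ofReal_one, hb', ENNReal.ofReal_toReal hBne]

/-- if `γ > 0` and `f` is a minimizer of `ρ_{C,γ}`, then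
`ρ_{C,γ}(f) = 1 - ∫_𝔻 |f| e^{-γ|z|²} dA`. -/
theorem planar_minimizer_value (γ : ℝ) (hγ : 0 < γ) (f : ℂ → ℂ) (hf : IsMinC γ f) :
    rhoC γ f = 1 - ∫⁻ z in ball (0:ℂ) 1, ENNReal.ofReal
        (‖f z‖ * Real.exp (-γ * ‖z‖ ^ 2)) ∂dA := by
  have hφ0 : ∀ z : ℂ, 0 ≤ ‖f z‖ * Real.exp (-γ * ‖z‖ ^ 2) :=
    fun z => mul_nonneg (norm_nonneg _) (Real.exp_pos _).le
  have hφm : AEMeasurable (fun z => ‖f z‖ * Real.exp (-γ * ‖z‖ ^ 2))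
      (dA.restrict (ball (0:ℂ) 1)) := by
    have hc : ContinuousOn (fun z => ‖f z‖ * Real.exp (-γ * ‖z‖ ^ 2))
        (ball (0:ℂ) 1) :=
      (continuous_norm.comp_continuousOn hf.1.continuousOn).mul
        ((Real.continuous_exp.comp (by continuity)).continuousOn)
    exact hc.aemeasurable measurableSet_ball
  have hμuniv : dA.restrict (ball (0:ℂ) 1) univ = 1 := by
    rw [Measure.restrict_apply_univ]
    simp only [dA, Measure.smul_apply, Complex.volume_ball, smul_eq_mul]
    rw [ENNReal.ofReal_one, one_pow, one_mul, ← ENNReal.ofReal_coe_nnreal, NNReal.coe_real_pi,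
      ENNReal.inv_mul_cancel (by simp [Real.pi_pos]) ENNReal.ofReal_ne_top]
  have hmin : ∀ t : ℝ, 0 ≤ t →
      (∫⁻ z, ENNReal.ofReal ((‖f z‖ * Real.exp (-γ * ‖z‖ ^ 2) - 1) ^ 2)
          ∂(dA.restrict (ball (0:ℂ) 1)))
        ≤ ∫⁻ z, ENNReal.ofReal
            ((t * (‖f z‖ * Real.exp (-γ * ‖z‖ ^ 2)) - 1) ^ 2)
          ∂(dA.restrict (ball (0:ℂ) 1)) := by
    intro t ht
    have hdiff : DifferentiableOn ℂ (fun z => ((t:ℝ):ℂ) * f z) (ball 0 1) :=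
      (differentiableOn_const _).mul hf.1
    have h := hf.2 _ hdiff
    have hgt : rhoC γ (fun z => ((t:ℝ):ℂ) * f z)
        = ∫⁻ z, ENNReal.ofReal
            ((t * (‖f z‖ * Real.exp (-γ * ‖z‖ ^ 2)) - 1) ^ 2)
          ∂(dA.restrict (ball (0:ℂ) 1)) := by
      simp only [rhoC]
      refine lintegral_congr fun z => ?_
      rw [norm_mul, Complex.norm_real, Real.norm_of_nonneg ht, mul_assoc]
    rw [hgt] at h
    exact h
  exact aux_min_planar (dA.restrict (ball (0:ℂ) 1)) hμuniv _ hφ0 hφm hmin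
end

section
/- Planar L¹-non-concentration: let (γ_k) be a sequence of positive reals tending to ∞, let (δ_k) ⊂ (0,1) tend to 0, and for each k let f_k be a minimizer of ρ_{C,γ_k}. Then ∫_{𝔸(1−δ_k,1)} |f_k(z)| e^{−γ_k|z|²} dA(z) → 0 as k → ∞. -/
open MeasureTheory Filter Set Metric Polynomial
open scoped ENNReal Topology NNReal

lemma piE_eq : (ENNReal.ofReal Real.pi) = (NNReal.pi : ℝ≥0∞) := by
  rw [← NNReal.coe_real_pi, ENNReal.ofReal_coe_nnreal]

lemma piE_ne_zero : (NNReal.pi : ℝ≥0∞) ≠ 0 := by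
  simp [← piE_eq, ENNReal.ofReal_pos.mpr Real.pi_pos, (ENNReal.ofReal_pos.mpr Real.pi_pos).ne']

lemma dA_ball_one : dA (ball (0:ℂ) 1) = 1 := by
  simp only [dA, Measure.smul_apply, smul_eq_mul, Complex.volume_ball, piE_eq,
    ENNReal.ofReal_one, one_pow, one_mul]
  exact ENNReal.inv_mul_cancel piE_ne_zero ENNReal.coe_ne_top


lemma dA_ann (δ : ℝ) (h : δ ∈ Set.Ioo (0:ℝ) 1) :
    dA (ann (1 - δ) 1) = 1 - ENNReal.ofReal ((1 - δ)^2) := by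
  have hsub : closedBall (0:ℂ) (1-δ) ⊆ ball (0:ℂ) 1 :=
    closedBall_subset_ball (by linarith [h.1])
  have hd : volume (ann (1-δ) 1) = volume (ball (0:ℂ) 1) - volume (closedBall (0:ℂ) (1-δ)) :=
    measure_diff hsub measurableSet_closedBall.nullMeasurableSet
      (by simp [Complex.volume_closedBall]; exact ENNReal.mul_ne_top (by simp) ENNReal.coe_ne_top)
  simp only [dA, Measure.smul_apply, smul_eq_mul, hd, Complex.volume_ball,
    Complex.volume_closedBall, piE_eq, ENNReal.ofReal_one, one_pow, one_mul]
  rw [ENNReal.mul_sub (fun _ _ => ENNReal.inv_ne_top.mpr piE_ne_zero),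
    ENNReal.inv_mul_cancel piE_ne_zero ENNReal.coe_ne_top, mul_comm _ ((NNReal.pi : ℝ≥0∞)),
    ← mul_assoc, ENNReal.inv_mul_cancel piE_ne_zero ENNReal.coe_ne_top, one_mul,
    ENNReal.ofReal_pow (by linarith [h.2])]



lemma rhoC_le_one {γ : ℝ} {f : ℂ → ℂ} (h : IsMinC γ f) : rhoC γ f ≤ 1 := by
  have h0 := h.2 (fun _ => 0) (differentiableOn_const 0)
  have : rhoC γ (fun _ => 0) = 1 := by
    simp only [rhoC, map_zero, norm_zero, zero_mul, zero_sub, neg_one_sq, ENNReal.ofReal_one]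
    rw [setLIntegral_const, one_mul, dA_ball_one]
  exact this ▸ h0

lemma key_bound {γ : ℝ} {f : ℂ → ℂ} (h : IsMinC γ f) {δ : ℝ} (hδ : δ ∈ Set.Ioo (0:ℝ) 1)
    (c : ℝ) (hc : 0 < c) :
    ∫⁻ z in ann (1 - δ) 1, ENNReal.ofReal
        (‖f z‖ * Real.exp (-γ * ‖z‖ ^ 2)) ∂dA ≤
      ENNReal.ofReal (1 + c/2) * dA (ann (1 - δ) 1) + (ENNReal.ofReal (2*c))⁻¹ := by
  set w : ℂ → ℝ := fun z => ‖f z‖ * Real.exp (-γ * ‖z‖ ^ 2) with hw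
  have hpt : ∀ z, ENNReal.ofReal (w z) ≤
      ENNReal.ofReal (1 + c/2) + (ENNReal.ofReal (2*c))⁻¹ * ENNReal.ofReal ((w z - 1)^2) := by
    intro z
    have h1 : w z ≤ (1 + c/2) + (w z - 1)^2 / (2*c) := by
      rw [← sub_le_iff_le_add', le_div_iff₀ (by linarith : (0:ℝ) < 2*c)]
      nlinarith [sq_nonneg (w z - 1 - c)]
    calc ENNReal.ofReal (w z) ≤ ENNReal.ofReal ((1 + c/2) + (w z - 1)^2 / (2*c)) :=
          ENNReal.ofReal_le_ofReal h1
      _ = ENNReal.ofReal (1 + c/2) + ENNReal.ofReal ((w z - 1)^2 / (2*c)) :=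
          ENNReal.ofReal_add (by linarith) (by positivity)
      _ = ENNReal.ofReal (1 + c/2) + (ENNReal.ofReal (2*c))⁻¹ * ENNReal.ofReal ((w z - 1)^2) := by
          rw [ENNReal.ofReal_div_of_pos (by linarith : (0:ℝ) < 2*c), ENNReal.div_eq_inv_mul]
  calc ∫⁻ z in ann (1 - δ) 1, ENNReal.ofReal (w z) ∂dA
      ≤ ∫⁻ z in ann (1 - δ) 1, (ENNReal.ofReal (1 + c/2)
          + (ENNReal.ofReal (2*c))⁻¹ * ENNReal.ofReal ((w z - 1)^2)) ∂dA :=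
        lintegral_mono fun z => hpt z
    _ = ENNReal.ofReal (1 + c/2) * dA (ann (1 - δ) 1)
        + ∫⁻ z in ann (1 - δ) 1, (ENNReal.ofReal (2*c))⁻¹ * ENNReal.ofReal ((w z - 1)^2) ∂dA := by
        rw [lintegral_add_left measurable_const, setLIntegral_const]
    _ ≤ ENNReal.ofReal (1 + c/2) * dA (ann (1 - δ) 1) + (ENNReal.ofReal (2*c))⁻¹ := by
        refine add_le_add le_rfl ?_
        rw [lintegral_const_mul' _ _ (ENNReal.inv_ne_top.mpr (ENNReal.ofReal_pos.mpr (by linarith : (0:ℝ) < 2*c)).ne')]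
        have h2 : ∫⁻ z in ann (1 - δ) 1, ENNReal.ofReal ((w z - 1)^2) ∂dA ≤ rhoC γ f :=
          lintegral_mono_set diff_subset
        calc (ENNReal.ofReal (2*c))⁻¹ * ∫⁻ z in ann (1 - δ) 1, ENNReal.ofReal ((w z - 1)^2) ∂dA
            ≤ (ENNReal.ofReal (2*c))⁻¹ * 1 := mul_le_mul_right (h2.trans (rhoC_le_one h)) _
          _ = (ENNReal.ofReal (2*c))⁻¹ := mul_one _

/-- planar L¹-non-concentration. If `γ_k → ∞`, `δ_k ∈ (0,1)` tends to 0,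
and `f_k` minimizes `ρ_{C,γ_k}`, then `∫_{𝔸(1-δ_k,1)} |f_k| e^{-γ_k|z|²} dA → 0`. -/
theorem planar_L1_nonconcentration (γ : ℕ → ℝ) (hγpos : ∀ k, 0 < γ k)
    (hγ : Tendsto γ atTop atTop)
    (δ : ℕ → ℝ) (hδ : ∀ k, δ k ∈ Ioo (0:ℝ) 1) (hδ0 : Tendsto δ atTop (𝓝 0))
    (f : ℕ → ℂ → ℂ) (hf : ∀ k, IsMinC (γ k) (f k)) :
    Tendsto (fun k => ∫⁻ z in ann (1 - δ k) 1, ENNReal.ofReal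
        (‖f k z‖ * Real.exp (-(γ k) * ‖z‖ ^ 2)) ∂dA)
      atTop (𝓝 0) := by
  -- measure of annuli tends to zero
  have hμ : Tendsto (fun k => dA (ann (1 - δ k) 1)) atTop (𝓝 0) := by
    have h1 : Tendsto (fun k => ENNReal.ofReal ((1 - δ k)^2)) atTop (𝓝 1) := by
      have : Tendsto (fun k => (1 - δ k)^2) atTop (𝓝 1) := by
        have h0 : Tendsto (fun k => 1 - δ k) atTop (𝓝 (1 - 0)) :=
          (tendsto_const_nhds : Tendsto (fun _ : ℕ => (1:ℝ)) atTop (𝓝 1)).sub hδ0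
        simpa using h0.pow 2
      simpa [Function.comp_def] using (ENNReal.continuous_ofReal.continuousAt.tendsto.comp this)
    have h2 : Tendsto (fun k => 1 - ENNReal.ofReal ((1 - δ k)^2)) atTop (𝓝 (1 - 1)) :=
      ENNReal.Tendsto.sub tendsto_const_nhds h1 (Or.inl ENNReal.one_ne_top)
    simp only [tsub_self] at h2
    refine h2.congr fun k => ?_
    rw [dA_ann _ (hδ k)]
  rw [ENNReal.tendsto_nhds_zero]
  intro ε hε
  obtain ⟨n, hn⟩ := ENNReal.exists_inv_nat_lt (ENNReal.half_pos hε.ne').ne'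
  have hn0 : n ≠ 0 := by rintro rfl; simp at hn
  have hnR : (0:ℝ) < n := by exact_mod_cast Nat.pos_of_ne_zero hn0
  set c : ℝ := (n : ℝ) with hcdef
  set C : ℝ≥0∞ := ENNReal.ofReal (1 + c/2) with hC
  have hC0 : C ≠ 0 := (ENNReal.ofReal_pos.mpr (by positivity)).ne'
  have hCtop : C ≠ ∞ := ENNReal.ofReal_ne_top
  -- the (2c)⁻¹ term is ≤ ε/2
  have hterm : (ENNReal.ofReal (2*c))⁻¹ ≤ ε / 2 := by
    have h1 : (n : ℝ≥0∞) ≤ ENNReal.ofReal (2*c) := by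
      rw [← ENNReal.ofReal_natCast n]
      exact ENNReal.ofReal_le_ofReal (by simp [hcdef]; linarith)
    exact le_trans (ENNReal.inv_le_inv.mpr h1) hn.le
  -- eventually μ_k small
  have hev : ∀ᶠ k in atTop, dA (ann (1 - δ k) 1) ≤ C⁻¹ * (ε / 2) := by
    have hpos : (0:ℝ≥0∞) < C⁻¹ * (ε / 2) :=
      ENNReal.mul_pos (ENNReal.inv_ne_zero.mpr hCtop) (ENNReal.half_pos hε.ne').ne'
    exact (ENNReal.tendsto_nhds_zero.mp hμ) _ hpos
  filter_upwards [hev] with k hk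
  calc ∫⁻ z in ann (1 - δ k) 1, ENNReal.ofReal
        (‖f k z‖ * Real.exp (-(γ k) * ‖z‖ ^ 2)) ∂dA
      ≤ C * dA (ann (1 - δ k) 1) + (ENNReal.ofReal (2*c))⁻¹ :=
        key_bound (hf k) (hδ k) c hnR
    _ ≤ C * (C⁻¹ * (ε / 2)) + ε / 2 := add_le_add (mul_le_mul_right hk _) hterm
    _ = ε / 2 + ε / 2 := by rw [← mul_assoc, ENNReal.mul_inv_cancel hC0 hCtop, one_mul]
    _ = ε := ENNReal.add_halves ε
end

section
/- Planar parameter freedom: let α : (0,∞) → (0,∞) satisfy α_γ → 1 as γ → ∞. Then liminf_{γ→∞} inf_{f ∈ Pol(ℂ)} ∫_𝔻 (|f(z)| e^{−α_γ γ |z|²} − 1)² dA(z) ≥ ρ_C. -/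
open MeasureTheory Filter Set Metric Polynomial
open scoped ENNReal Topology NNReal

/-- planar parameter freedom. If `α : (0,∞) → (0,∞)` and `α_γ → 1`
as `γ → ∞`, then `liminf_{γ→∞} inf_f ∫_𝔻 (|f| e^{-α_γ γ |z|²} - 1)² dA ≥ ρ_C`. -/
theorem planar_parameter_freedom (α : ℝ → ℝ) (hαpos : ∀ γ : ℝ, 0 < γ → 0 < α γ)
    (hα : Tendsto α atTop (𝓝 1)) :
    rhoCd ≤ liminf (fun γ : ℝ => ⨅ p : Polynomial ℂ,
        ∫⁻ z in ball (0:ℂ) 1, ENNReal.ofReal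
          ((‖p.eval z‖ * Real.exp (-(α γ * γ) * ‖z‖ ^ 2) - 1) ^ 2) ∂dA)
      atTop := by
  have hφ : Tendsto (fun γ : ℝ => α γ * γ) atTop atTop :=
    hα.pos_mul_atTop one_pos tendsto_id
  have hmap : map (fun γ : ℝ => α γ * γ) atTop ≤ atTop := hφ
  calc rhoCd ≤ liminf (fun β : ℝ => ⨅ p : Polynomial ℂ, rhoC β fun z => p.eval z)
        (map (fun γ : ℝ => α γ * γ) atTop) :=
      liminf_le_liminf_of_le hmap
    _ = liminf ((fun β : ℝ => ⨅ p : Polynomial ℂ, rhoC β fun z => p.eval z) ∘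
        (fun γ : ℝ => α γ * γ)) atTop := (liminf_comp _ _ _).symm
    _ = _ := rfl
end

section
/- Planar L²-non-concentration: let (γ_k) be a sequence of positive reals tending to ∞ such that there exist polynomials p_k with ρ_{C,γ_k}(p_k) → ρ_C; let (δ_k) ⊂ (0,1) tend to 0, and for each k let f_k be a minimizer of ρ_{C,γ_k}. Then ∫_{𝔸(1−δ_k,1)} |f_k(z)|² e^{−2γ_k|z|²} dA(z) → 0 as k → ∞. -/
open MeasureTheory Filter Set Metric Polynomial
open scoped ENNReal Topology NNReal

noncomputable section Helpers

namespace PlanarNC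

/-- The pointwise discrepancy weight. -/
def W (γ : ℝ) (f : ℂ → ℂ) (z : ℂ) : ℝ≥0∞ :=
  ENNReal.ofReal ((‖f z‖ * Real.exp (-γ * ‖z‖ ^ 2) - 1) ^ 2)

lemma rhoC_eq (γ : ℝ) (f : ℂ → ℂ) : rhoC γ f = ∫⁻ z in ball (0:ℂ) 1, W γ f z ∂dA := rfl

/-- The infimum of `rhoC` over polynomials. -/
def m (γ : ℝ) : ℝ≥0∞ := ⨅ p : Polynomial ℂ, rhoC γ fun z => p.eval z

lemma rhoCd_eq : rhoCd = liminf m atTop := rfl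

lemma pi_pos_enn : (0:ℝ≥0∞) < ENNReal.ofReal Real.pi := by
  simp [ENNReal.ofReal_pos, Real.pi_pos]

lemma dA_apply (S : Set ℂ) : dA S = (ENNReal.ofReal Real.pi)⁻¹ * volume S := by
  simp [dA]

lemma lintegral_dA (F : ℂ → ℝ≥0∞) (A : Set ℂ) :
    ∫⁻ z in A, F z ∂dA = (ENNReal.ofReal Real.pi)⁻¹ * ∫⁻ z in A, F z ∂(volume : Measure ℂ) := by
  rw [dA, Measure.restrict_smul, lintegral_smul_measure, smul_eq_mul]

lemma coe_pi : ((NNReal.pi : ℝ≥0) : ℝ≥0∞) = ENNReal.ofReal Real.pi := by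
  rw [← NNReal.coe_real_pi, ENNReal.ofReal_coe_nnreal]

lemma dA_ball_one : dA (ball (0:ℂ) 1) = 1 := by
  rw [dA_apply, Complex.volume_ball, coe_pi]
  simp only [ENNReal.ofReal_one, one_pow, one_mul]
  exact ENNReal.inv_mul_cancel (ne_of_gt pi_pos_enn) ENNReal.ofReal_ne_top

lemma dA_ann {s : ℝ} (hs0 : 0 ≤ s) (hs1 : s < 1) :
    dA (ann s 1) = ENNReal.ofReal (1 - s ^ 2) := by
  have hfin : (volume : Measure ℂ) (closedBall (0:ℂ) s) ≠ ∞ := by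
    rw [Complex.volume_closedBall]
    exact ENNReal.mul_ne_top (ENNReal.pow_ne_top ENNReal.ofReal_ne_top) ENNReal.coe_ne_top
  have hv : (volume : Measure ℂ) (ann s 1)
      = ENNReal.ofReal (1 - s ^ 2) * ENNReal.ofReal Real.pi := by
    rw [ann, measure_diff (closedBall_subset_ball hs1)
        measurableSet_closedBall.nullMeasurableSet hfin,
      Complex.volume_ball, Complex.volume_closedBall, coe_pi,
      ENNReal.ofReal_one, one_pow, one_mul, ← ENNReal.ofReal_pow hs0,
      ENNReal.ofReal_sub _ (by positivity),
      ENNReal.sub_mul (fun _ _ => ENNReal.ofReal_ne_top), ENNReal.ofReal_one, one_mul]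
  rw [dA_apply, hv, mul_comm ((ENNReal.ofReal Real.pi)⁻¹), mul_assoc,
    ENNReal.mul_inv_cancel (ne_of_gt pi_pos_enn) ENNReal.ofReal_ne_top, mul_one]

lemma m_le_one {γ : ℝ} (hγ : 0 ≤ γ) : m γ ≤ 1 := by
  refine le_trans (iInf_le _ (1 : Polynomial ℂ)) ?_
  have hpt : ∀ z : ℂ, ENNReal.ofReal
      ((‖(1:Polynomial ℂ).eval z‖ * Real.exp (-γ * ‖z‖ ^ 2) - 1) ^ 2)
      ≤ 1 := by
    intro z
    have h1 : Real.exp (-γ * ‖z‖ ^ 2) ≤ 1 := by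
      rw [← Real.exp_zero]
      exact Real.exp_le_exp.2 (by nlinarith [sq_nonneg (‖z‖)])
    have h2 : 0 < Real.exp (-γ * ‖z‖ ^ 2) := Real.exp_pos _
    rw [Polynomial.eval_one, norm_one, one_mul]
    rw [show (1:ℝ≥0∞) = ENNReal.ofReal 1 by simp]
    exact ENNReal.ofReal_le_ofReal (by nlinarith)
  calc rhoC γ (fun z => (1:Polynomial ℂ).eval z)
      ≤ ∫⁻ _ in ball (0:ℂ) 1, 1 ∂dA := lintegral_mono hpt
    _ = 1 := by rw [setLIntegral_const, dA_ball_one, one_mul]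

lemma rhoCd_le_one : rhoCd ≤ 1 := by
  rw [rhoCd_eq]
  refine liminf_le_of_frequently_le ?_
  exact ((eventually_ge_atTop (0:ℝ)).mono (fun γ hγ => m_le_one hγ)).frequently

lemma rhoCd_ne_top : rhoCd ≠ ∞ := ne_top_of_le_ne_top ENNReal.one_ne_top rhoCd_le_one

/-- Scaling identity for integrals over scaled balls (w.r.t. `dA`). -/
lemma lintegral_ball_smul (F : ℂ → ℝ≥0∞) {s : ℝ} (hs : 0 < s) :
    ∫⁻ z in ball (0:ℂ) s, F z ∂dA
      = ENNReal.ofReal (s ^ 2) * ∫⁻ w in ball (0:ℂ) 1, F (s • w) ∂dA := by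
  have hemb : MeasurableEmbedding (fun w : ℂ => s • w) :=
    measurableEmbedding_const_smul₀ (G₀ := ℝ) hs.ne'
  have hmap : Measure.map (fun w : ℂ => s • w) (volume : Measure ℂ)
      = ENNReal.ofReal ((s ^ 2)⁻¹) • volume := by
    rw [show (fun w : ℂ => s • w) = (s • ·) from rfl,
      MeasureTheory.Measure.map_addHaar_smul volume hs.ne']
    congr 1
    rw [Complex.finrank_real_complex, abs_of_nonneg (by positivity)]
  have hpre : (fun w : ℂ => s • w) ⁻¹' (ball (0:ℂ) s) = ball (0:ℂ) 1 := by
    ext w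
    simp only [mem_preimage, mem_ball, dist_zero_right, norm_smul, Real.norm_eq_abs,
      abs_of_pos hs]
    constructor
    · intro h; nlinarith [norm_nonneg w]
    · intro h; nlinarith [norm_nonneg w]
  have h2 : ∫⁻ w in ball (0:ℂ) 1, F (s • w) ∂(volume : Measure ℂ)
      = ENNReal.ofReal ((s ^ 2)⁻¹)
          * ∫⁻ z in ball (0:ℂ) s, F z ∂(volume : Measure ℂ) := by
    rw [← hemb.lintegral_map, ← hpre, ← Measure.restrict_map hemb.measurable measurableSet_ball,
      hmap, Measure.restrict_smul, lintegral_smul_measure, smul_eq_mul]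
  have hcan : ENNReal.ofReal (s ^ 2) * ENNReal.ofReal ((s ^ 2)⁻¹) = 1 := by
    rw [ENNReal.ofReal_inv_of_pos (by positivity)]
    exact ENNReal.mul_inv_cancel (by simp [ENNReal.ofReal_pos]; positivity) ENNReal.ofReal_ne_top
  rw [lintegral_dA, lintegral_dA, h2]
  calc (ENNReal.ofReal Real.pi)⁻¹ * ∫⁻ z in ball (0:ℂ) s, F z ∂(volume : Measure ℂ)
      = ENNReal.ofReal (s ^ 2) * (ENNReal.ofReal Real.pi)⁻¹
        * (ENNReal.ofReal ((s ^ 2)⁻¹) * ∫⁻ z in ball (0:ℂ) s, F z ∂(volume : Measure ℂ)) := by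
        rw [show ENNReal.ofReal (s ^ 2) * (ENNReal.ofReal Real.pi)⁻¹
          * (ENNReal.ofReal ((s ^ 2)⁻¹) * ∫⁻ z in ball (0:ℂ) s, F z ∂(volume : Measure ℂ))
          = ENNReal.ofReal (s ^ 2) * ENNReal.ofReal ((s ^ 2)⁻¹)
            * ((ENNReal.ofReal Real.pi)⁻¹ * ∫⁻ z in ball (0:ℂ) s, F z ∂(volume : Measure ℂ))
          from by ring, hcan, one_mul]
    _ = ENNReal.ofReal (s ^ 2) * ((ENNReal.ofReal Real.pi)⁻¹
        * (ENNReal.ofReal ((s ^ 2)⁻¹) * ∫⁻ z in ball (0:ℂ) s, F z ∂(volume : Measure ℂ))) := by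
        ring

/-- Splitting the disk into the annulus and the smaller ball. -/
lemma split (F : ℂ → ℝ≥0∞) {s : ℝ} (hs1 : s < 1) :
    (∫⁻ z in ann s 1, F z ∂dA) + ∫⁻ z in ball (0:ℂ) s, F z ∂dA
      ≤ ∫⁻ z in ball (0:ℂ) 1, F z ∂dA := by
  have hdisj : Disjoint (ann s 1) (ball (0:ℂ) s) :=
    disjoint_sdiff_left.mono_right ball_subset_closedBall
  have hunion : ann s 1 ∪ ball (0:ℂ) s ⊆ ball (0:ℂ) 1 :=
    union_subset diff_subset (ball_subset_ball hs1.le)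
  rw [← lintegral_union measurableSet_ball hdisj]
  exact lintegral_mono_set hunion

/-- Scaled rhoC identity. -/
lemma rhoC_scaled (f : ℂ → ℂ) (γ : ℝ) {s : ℝ} (hs : 0 < s) :
    ∫⁻ z in ball (0:ℂ) s, W γ f z ∂dA
      = ENNReal.ofReal (s ^ 2) * rhoC (γ * s ^ 2) (fun w => f (s • w)) := by
  rw [lintegral_ball_smul (W γ f) hs, rhoC_eq]
  congr 1
  refine lintegral_congr (fun w => ?_)
  have habs : ‖s • w‖ ^ 2 = s ^ 2 * ‖w‖ ^ 2 := by
    rw [norm_smul, Real.norm_eq_abs,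
      abs_of_pos hs]
    ring
  simp only [W, habs]
  ring_nf

end PlanarNC
end Helpers

noncomputable section Helpers2
namespace PlanarNC

/-- The partial-sum polynomial of a formal power series over `ℂ`. -/
def taylorPoly (P : FormalMultilinearSeries ℂ ℂ ℂ) (n : ℕ) : Polynomial ℂ :=
  ∑ i ∈ Finset.range n, Polynomial.C (P.coeff i) * Polynomial.X ^ i

lemma eval_taylorPoly (P : FormalMultilinearSeries ℂ ℂ ℂ) (n : ℕ) (y : ℂ) :
    (taylorPoly P n).eval y = P.partialSum n y := by
  rw [taylorPoly, Polynomial.eval_finset_sum, FormalMultilinearSeries.partialSum]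
  refine Finset.sum_congr rfl fun i _ => ?_
  rw [Polynomial.eval_mul, Polynomial.eval_C, Polynomial.eval_pow, Polynomial.eval_X,
    FormalMultilinearSeries.apply_eq_pow_smul_coeff, smul_eq_mul, mul_comm]

/-- The infimum over polynomials is at most the value at a scaled holomorphic function. -/
lemma inf_le_scaled (f : ℂ → ℂ) (hf : DifferentiableOn ℂ f (ball (0:ℂ) 1))
    {s γ' : ℝ} (hs0 : 0 < s) (hs1 : s < 1) (hγ' : 0 ≤ γ') :
    m γ' ≤ rhoC γ' (fun w => f (s • w)) := by
  set r' : ℝ≥0 := ⟨(s + 1) / 2, by positivity⟩ with hr'def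
  have hr'lt1 : (r' : ℝ) < 1 := by show (s + 1) / 2 < 1; linarith
  have hsr' : s < (r' : ℝ) := by show s < (s + 1) / 2; linarith
  have hr'pos : 0 < r' := by
    rw [← NNReal.coe_pos]; show (0:ℝ) < (s + 1) / 2; positivity
  have hps : HasFPowerSeriesOnBall f (cauchyPowerSeries f 0 r') 0 r' :=
    (hf.mono (closedBall_subset_ball hr'lt1)).hasFPowerSeriesOnBall hr'pos
  set r'' : ℝ≥0 := ⟨(s + r') / 2, by positivity⟩ with hr''def
  have hsr'' : s < (r'' : ℝ) := by show s < (s + r') / 2; linarith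
  have hr''r' : (r'' : ℝ≥0∞) < (r' : ℝ≥0∞) := by
    rw [ENNReal.coe_lt_coe, ← NNReal.coe_lt_coe]
    show (s + r') / 2 < (r' : ℝ); linarith
  have hTU := hps.tendstoUniformlyOn hr''r'
  obtain ⟨M, hM⟩ := (isCompact_closedBall (0:ℂ) s).exists_bound_of_continuousOn
    (hf.continuousOn.mono (closedBall_subset_ball hs1))
  set M' : ℝ := max M 0 with hM'def
  have hM'0 : 0 ≤ M' := le_max_right _ _
  have hM'b : ∀ x ∈ closedBall (0:ℂ) s, ‖f x‖ ≤ M' := fun x hx =>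
    le_trans (hM x hx) (le_max_left _ _)
  refine ENNReal.le_of_forall_pos_le_add fun ε hε _ => ?_
  set η : ℝ := min 1 ((ε : ℝ) / (2 * M' + 3)) with hηdef
  have hεpos : (0:ℝ) < ε := by exact_mod_cast hε
  have hη0 : 0 < η := lt_min one_pos (div_pos hεpos (by linarith))
  have hη1 : η ≤ 1 := min_le_left _ _
  have hηs : η * (2 * M' + 3) ≤ (ε : ℝ) := by
    have h1 : η ≤ (ε : ℝ) / (2 * M' + 3) := min_le_right _ _
    have h2 : (0:ℝ) < 2 * M' + 3 := by linarith
    calc η * (2 * M' + 3) ≤ (ε : ℝ) / (2 * M' + 3) * (2 * M' + 3) :=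
          mul_le_mul_of_nonneg_right h1 h2.le
      _ = (ε : ℝ) := div_mul_cancel₀ _ h2.ne'
  obtain ⟨n, hn⟩ := (Metric.tendstoUniformlyOn_iff.mp hTU η hη0).exists
  set q : Polynomial ℂ :=
    (taylorPoly (cauchyPowerSeries f 0 r') n).comp (Polynomial.C (s:ℂ) * Polynomial.X)
    with hqdef
  have hqeval : ∀ w : ℂ, q.eval w = (cauchyPowerSeries f 0 r').partialSum n (s • w) := by
    intro w
    rw [hqdef, Polynomial.eval_comp, eval_taylorPoly]
    congr 1
    simp [Complex.real_smul]
  have hpt : ∀ w ∈ ball (0:ℂ) 1,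
      W γ' (fun z => q.eval z) w
        ≤ W γ' (fun z => f (s • z)) w + ENNReal.ofReal (η * (2 * M' + 3)) := by
    intro w hw
    have hnw : ‖s • w‖ = s * ‖w‖ := by
      rw [norm_smul, Real.norm_eq_abs, abs_of_pos hs0]
    have hwb : ‖w‖ < 1 := by simpa [mem_ball, dist_zero_right] using hw
    have hmem'' : s • w ∈ ball (0:ℂ) (r'' : ℝ) := by
      rw [mem_ball, dist_zero_right, hnw]
      nlinarith [norm_nonneg w]
    have hmemc : s • w ∈ closedBall (0:ℂ) s := by
      rw [mem_closedBall, dist_zero_right, hnw]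
      nlinarith [norm_nonneg w]
    have hdist := hn (s • w) hmem''
    rw [zero_add] at hdist
    have h1 : |‖q.eval w‖ - ‖f (s • w)‖| ≤ η := by
      rw [hqeval w]
      refine le_trans (abs_norm_sub_norm_le _ _) ?_
      rw [← dist_eq_norm, dist_comm]
      exact hdist.le
    set E : ℝ := Real.exp (-γ' * ‖w‖ ^ 2) with hEdef
    have hE0 : 0 < E := Real.exp_pos _
    have hE1 : E ≤ 1 := by
      rw [hEdef, ← Real.exp_zero]
      exact Real.exp_le_exp.2 (by nlinarith [sq_nonneg (‖w‖)])
    set u : ℝ := ‖q.eval w‖ * E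
    set v : ℝ := ‖f (s • w)‖ * E
    have hv0 : 0 ≤ v := mul_nonneg (norm_nonneg _) hE0.le
    have hvM : v ≤ M' := by
      calc v ≤ M' * E := mul_le_mul_of_nonneg_right (hM'b _ hmemc) hE0.le
        _ ≤ M' * 1 := mul_le_mul_of_nonneg_left hE1 hM'0
        _ = M' := mul_one _
    have huv : |u - v| ≤ η := by
      have : u - v = (‖q.eval w‖ - ‖f (s • w)‖) * E := by ring
      rw [this, abs_mul, abs_of_pos hE0]
      calc |‖q.eval w‖ - ‖f (s • w)‖| * E ≤ η * 1 :=
            mul_le_mul h1 hE1 hE0.le hη0.le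
        _ = η := mul_one _
    have hA : |u - 1| ≤ |v - 1| + η := by
      calc |u - 1| = |(v - 1) + (u - v)| := by ring_nf
        _ ≤ |v - 1| + |u - v| := abs_add_le _ _
        _ ≤ |v - 1| + η := by linarith
    have hB : |v - 1| ≤ M' + 1 := by
      rw [abs_le]; constructor <;> linarith
    have hkey : (u - 1) ^ 2 ≤ (v - 1) ^ 2 + η * (2 * M' + 3) := by
      have h2 : (u - 1) ^ 2 = |u - 1| ^ 2 := (sq_abs _).symm
      have h3 : |u - 1| ^ 2 ≤ (|v - 1| + η) ^ 2 :=
        pow_le_pow_left₀ (abs_nonneg _) hA 2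
      nlinarith [sq_abs (v - 1), abs_nonneg (v - 1)]
    unfold W
    calc ENNReal.ofReal ((‖q.eval w‖ * Real.exp (-γ' * ‖w‖ ^ 2) - 1) ^ 2)
        ≤ ENNReal.ofReal ((‖f (s • w)‖ * Real.exp (-γ' * ‖w‖ ^ 2) - 1) ^ 2
            + η * (2 * M' + 3)) := ENNReal.ofReal_le_ofReal hkey
      _ = _ := ENNReal.ofReal_add (by positivity) (by positivity)
  have hint : rhoC γ' (fun z => q.eval z)
      ≤ rhoC γ' (fun w => f (s • w)) + ENNReal.ofReal (η * (2 * M' + 3)) := by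
    rw [rhoC_eq, rhoC_eq]
    calc ∫⁻ w in ball (0:ℂ) 1, W γ' (fun z => q.eval z) w ∂dA
        ≤ ∫⁻ w in ball (0:ℂ) 1,
            (W γ' (fun z => f (s • z)) w + ENNReal.ofReal (η * (2 * M' + 3))) ∂dA :=
          setLIntegral_mono' measurableSet_ball hpt
      _ = (∫⁻ w in ball (0:ℂ) 1, W γ' (fun z => f (s • z)) w ∂dA)
            + ENNReal.ofReal (η * (2 * M' + 3)) * dA (ball (0:ℂ) 1) := by
          rw [lintegral_add_right _ measurable_const, setLIntegral_const]
      _ = _ := by rw [dA_ball_one, mul_one]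
  refine le_trans (iInf_le _ q) (le_trans hint ?_)
  refine add_le_add le_rfl ?_
  calc ENNReal.ofReal (η * (2 * M' + 3)) ≤ ENNReal.ofReal (ε : ℝ) :=
        ENNReal.ofReal_le_ofReal hηs
    _ = (ε : ℝ≥0∞) := ENNReal.ofReal_coe_nnreal

/-- Key ENNReal arithmetic. -/
lemma enn_key {J D L ε : ℝ≥0∞} (hεtop : ε ≠ ∞) (hL : L ≤ 1)
    (hJD : J + D ≤ L + ε) (hD : (1 - ε) * (L - ε) ≤ D) : J ≤ 3 * ε := by
  have hLtop : L ≠ ∞ := ne_top_of_le_ne_top ENNReal.one_ne_top hL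
  have hLεtop : L - ε ≠ ∞ := ne_top_of_le_ne_top hLtop tsub_le_self
  have hD2 : L - 2 * ε ≤ D := by
    refine le_trans ?_ hD
    rw [ENNReal.sub_mul fun _ _ => hLεtop, one_mul]
    have hεₗ : ε * (L - ε) ≤ ε := by
      calc ε * (L - ε) ≤ ε * 1 := mul_le_mul' le_rfl (le_trans tsub_le_self hL)
        _ = ε := mul_one _
    calc L - 2 * ε = L - ε - ε := by rw [tsub_tsub, two_mul]
      _ ≤ (L - ε) - ε * (L - ε) := tsub_le_tsub_left hεₗ _
  have hfin : L - 2 * ε ≠ ∞ := ne_top_of_le_ne_top hLtop tsub_le_self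
  have hstep : L + ε ≤ 3 * ε + (L - 2 * ε) := by
    rcases le_total (2 * ε) L with h | h
    · have : L - 2 * ε + 2 * ε = L := tsub_add_cancel_of_le h
      calc L + ε = (L - 2 * ε) + 2 * ε + ε := by rw [this]
        _ = 3 * ε + (L - 2 * ε) := by ring
        _ ≤ 3 * ε + (L - 2 * ε) := le_rfl
    · calc L + ε ≤ 2 * ε + ε := add_le_add h le_rfl
        _ = 3 * ε := by ring
        _ ≤ 3 * ε + (L - 2 * ε) := le_self_add
  have : J + (L - 2 * ε) ≤ 3 * ε + (L - 2 * ε) :=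
    le_trans (add_le_add le_rfl hD2) (le_trans hJD hstep)
  rw [add_comm (3 * ε)] at this
  rw [add_comm J] at this
  exact (ENNReal.add_le_add_iff_left hfin).mp this

end PlanarNC
end Helpers2

/-- planar L²-non-concentration. Let `γ_k → ∞` be positive with
polynomials `p_k` satisfying `ρ_{C,γ_k}(p_k) → ρ_C`, let `δ_k ∈ (0,1)` tend to 0,
and let `f_k` minimize `ρ_{C,γ_k}`. Then
`∫_{𝔸(1-δ_k,1)} |f_k|² e^{-2γ_k|z|²} dA → 0`. -/
theorem planar_L2_nonconcentration (γ : ℕ → ℝ) (hγpos : ∀ k, 0 < γ k)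
    (hγ : Tendsto γ atTop atTop)
    (p : ℕ → Polynomial ℂ)
    (hp : Tendsto (fun k => rhoC (γ k) fun z => (p k).eval z) atTop (𝓝 rhoCd))
    (δ : ℕ → ℝ) (hδ : ∀ k, δ k ∈ Ioo (0:ℝ) 1) (hδ0 : Tendsto δ atTop (𝓝 0))
    (f : ℕ → ℂ → ℂ) (hf : ∀ k, IsMinC (γ k) (f k)) :
    Tendsto (fun k => ∫⁻ z in ann (1 - δ k) 1, ENNReal.ofReal
        (‖f k z‖ ^ 2 * Real.exp (-(2 * γ k) * ‖z‖ ^ 2)) ∂dA)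
      atTop (𝓝 0) := by
  rw [ENNReal.tendsto_nhds_zero]
  intro ε hε
  set ε₁ : ℝ≥0∞ := min (ε / 8) 1 with hε₁def
  have hε₁pos : 0 < ε₁ := lt_min (ENNReal.div_pos hε.ne' (by norm_num)) one_pos
  have hε₁top : ε₁ ≠ ∞ := ne_top_of_le_ne_top ENNReal.one_ne_top (min_le_right _ _)
  set η : ℝ := ε₁.toReal with hηdef
  have hη0 : 0 < η := ENNReal.toReal_pos hε₁pos.ne' hε₁top
  have hofη : ENNReal.ofReal η = ε₁ := ENNReal.ofReal_toReal hε₁top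
  have hs0 : ∀ k, 0 < 1 - δ k := fun k => by linarith [(hδ k).2]
  have hs1 : ∀ k, 1 - δ k < 1 := fun k => by linarith [(hδ k).1]
  -- E1 : the minimal polynomial value is eventually close to `rhoCd`
  have hE1 : ∀ᶠ k in atTop, rhoC (γ k) (fun z => (p k).eval z) ≤ rhoCd + ε₁ :=
    hp.eventually_le_const (ENNReal.lt_add_right PlanarNC.rhoCd_ne_top hε₁pos.ne')
  have hsq : Tendsto (fun k => (1 - δ k) ^ 2) atTop (𝓝 1) := by
    have h := ((tendsto_const_nhds (x := (1:ℝ))).sub hδ0).pow 2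
    simpa using h
  have hγs : Tendsto (fun k => γ k * (1 - δ k) ^ 2) atTop atTop :=
    Filter.Tendsto.atTop_mul_pos one_pos hγ hsq
  -- E2 : eventual lower bound on the infimum at the rescaled parameter
  have hE2 : ∀ᶠ k in atTop, rhoCd - ε₁ ≤ PlanarNC.m (γ k * (1 - δ k) ^ 2) := by
    rcases eq_or_ne rhoCd 0 with h0 | h0
    · exact Eventually.of_forall fun k => by simp [h0]
    · have hlt : rhoCd - ε₁ < rhoCd :=
        ENNReal.sub_lt_self PlanarNC.rhoCd_ne_top h0 hε₁pos.ne'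
      have hlt2 : rhoCd - ε₁ < liminf PlanarNC.m atTop := by
        rw [← PlanarNC.rhoCd_eq]; exact hlt
      have hev : ∀ᶠ x : ℝ in atTop, rhoCd - ε₁ < PlanarNC.m x :=
        eventually_lt_of_lt_liminf hlt2
      exact (hγs.eventually hev).mono fun k hk => hk.le
  -- E3 : the scaling factor is eventually close to 1
  have hE3 : ∀ᶠ k in atTop, (1:ℝ≥0∞) - ε₁ ≤ ENNReal.ofReal ((1 - δ k) ^ 2) := by
    have hev : ∀ᶠ k in atTop, 1 - η < (1 - δ k) ^ 2 :=
      hsq.eventually_const_lt (by linarith)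
    refine hev.mono fun k hk => ?_
    calc (1:ℝ≥0∞) - ε₁ = ENNReal.ofReal (1 - η) := by
          rw [ENNReal.ofReal_sub _ hη0.le, ENNReal.ofReal_one, hofη]
      _ ≤ _ := ENNReal.ofReal_le_ofReal hk.le
  -- E4 : the annulus has small area
  have hE4 : ∀ᶠ k in atTop, dA (ann (1 - δ k) 1) ≤ ε₁ := by
    have hten : Tendsto (fun k => 1 - (1 - δ k) ^ 2) atTop (𝓝 0) := by
      have h := (tendsto_const_nhds (x := (1:ℝ))).sub hsq
      simpa using h
    have hev : ∀ᶠ k in atTop, 1 - (1 - δ k) ^ 2 < η := hten.eventually_lt_const hη0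
    refine hev.mono fun k hk => ?_
    rw [PlanarNC.dA_ann (hs0 k).le (hs1 k)]
    calc ENNReal.ofReal (1 - (1 - δ k) ^ 2) ≤ ENNReal.ofReal η :=
          ENNReal.ofReal_le_ofReal hk.le
      _ = ε₁ := hofη
  filter_upwards [hE1, hE2, hE3, hE4] with k h1 h2 h3 h4
  have hρf : rhoC (γ k) (f k) ≤ rhoC (γ k) (fun z => (p k).eval z) :=
    (hf k).2 _ ((p k).differentiable.differentiableOn)
  have hJD : (∫⁻ z in ann (1 - δ k) 1, PlanarNC.W (γ k) (f k) z ∂dA)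
      + (∫⁻ z in ball (0:ℂ) (1 - δ k), PlanarNC.W (γ k) (f k) z ∂dA) ≤ rhoCd + ε₁ := by
    refine le_trans (PlanarNC.split _ (hs1 k)) ?_
    rw [← PlanarNC.rhoC_eq]
    exact le_trans hρf h1
  have hD : ((1:ℝ≥0∞) - ε₁) * (rhoCd - ε₁)
      ≤ ∫⁻ z in ball (0:ℂ) (1 - δ k), PlanarNC.W (γ k) (f k) z ∂dA := by
    rw [PlanarNC.rhoC_scaled (f k) (γ k) (hs0 k)]
    refine mul_le_mul' h3 (le_trans h2 ?_)
    exact PlanarNC.inf_le_scaled (f k) (hf k).1 (hs0 k) (hs1 k)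
      (mul_nonneg (hγpos k).le (sq_nonneg _))
  have hJ : (∫⁻ z in ann (1 - δ k) 1, PlanarNC.W (γ k) (f k) z ∂dA) ≤ 3 * ε₁ :=
    PlanarNC.enn_key hε₁top PlanarNC.rhoCd_le_one hJD hD
  have hpt : ∀ z : ℂ, ENNReal.ofReal (‖f k z‖ ^ 2
      * Real.exp (-(2 * γ k) * ‖z‖ ^ 2))
      ≤ 2 * PlanarNC.W (γ k) (f k) z + 2 := by
    intro z
    set a : ℝ := ‖f k z‖ * Real.exp (-γ k * ‖z‖ ^ 2) with hadef
    have hexp : Real.exp (-(2 * γ k) * ‖z‖ ^ 2)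
        = Real.exp (-γ k * ‖z‖ ^ 2) ^ 2 := by
      conv_rhs => rw [pow_two, ← Real.exp_add]
      congr 1; ring
    have heq : ‖f k z‖ ^ 2 * Real.exp (-(2 * γ k) * ‖z‖ ^ 2)
        = a ^ 2 := by rw [hexp, hadef]; ring
    rw [heq]
    have hineq : a ^ 2 ≤ 2 * (a - 1) ^ 2 + 2 := by nlinarith [sq_nonneg (a - 2)]
    calc ENNReal.ofReal (a ^ 2) ≤ ENNReal.ofReal (2 * (a - 1) ^ 2 + 2) :=
          ENNReal.ofReal_le_ofReal hineq
      _ = 2 * PlanarNC.W (γ k) (f k) z + 2 := by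
          rw [ENNReal.ofReal_add (by positivity) (by norm_num),
            ENNReal.ofReal_mul (by norm_num)]
          norm_num [PlanarNC.W, hadef]
  calc (∫⁻ z in ann (1 - δ k) 1, ENNReal.ofReal (‖f k z‖ ^ 2
        * Real.exp (-(2 * γ k) * ‖z‖ ^ 2)) ∂dA)
      ≤ ∫⁻ z in ann (1 - δ k) 1, (2 * PlanarNC.W (γ k) (f k) z + 2) ∂dA :=
        lintegral_mono hpt
    _ = 2 * (∫⁻ z in ann (1 - δ k) 1, PlanarNC.W (γ k) (f k) z ∂dA)
        + 2 * dA (ann (1 - δ k) 1) := by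
        rw [lintegral_add_right _ measurable_const, setLIntegral_const,
          lintegral_const_mul' 2 _ ENNReal.ofNat_ne_top]
    _ ≤ 2 * (3 * ε₁) + 2 * ε₁ := add_le_add (mul_le_mul' le_rfl hJ) (mul_le_mul' le_rfl h4)
    _ = 8 * ε₁ := by ring
    _ ≤ ε := by
        calc (8:ℝ≥0∞) * ε₁ ≤ 8 * (ε / 8) := mul_le_mul' le_rfl (min_le_left _ _)
          _ = ε := ENNReal.mul_div_cancel' (by norm_num) (by norm_num)
end

section
/- If 0 < r < 1 and f is a minimizer of ρ_{H,r}, then (1/log(1/(1−r²))) ∫_{D(0,r)} |f(z)| dA(z) = (1/log(1/(1−r²))) ∫_{D(0,r)} |f(z)|² (1−|z|²) dA(z), and this common value is at most 1. -/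
open MeasureTheory Filter Set Metric Polynomial
open scoped ENNReal Topology NNReal

theorem aux_one_dim (r : ℝ) (hr0 : 0 < r) (hr1 : r < 1) :
    ∫ y in Set.Ioo (0:ℝ) r, y * (1 - y ^ 2)⁻¹ = Real.log (1 / (1 - r ^ 2)) / 2 := by
  have hne : ∀ y ∈ Set.uIcc (0:ℝ) r, 1 - y ^ 2 ≠ 0 := by
    intro y hy
    rw [Set.uIcc_of_le hr0.le] at hy
    nlinarith [hy.1, hy.2]
  have key : ∫ y in (0:ℝ)..r, y * (1 - y ^ 2)⁻¹ = Real.log (1 / (1 - r ^ 2)) / 2 := by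
    have hderiv : ∀ y ∈ Set.uIcc (0:ℝ) r,
        HasDerivAt (fun y : ℝ => -(Real.log (1 - y ^ 2)) / 2) (y * (1 - y ^ 2)⁻¹) y := by
      intro y hy
      have h1 : HasDerivAt (fun y : ℝ => 1 - y ^ 2) (-(2 * y)) y := by
        simpa using ((hasDerivAt_pow 2 y).const_sub 1)
      have h2 := (h1.log (hne y hy))
      have h3 : HasDerivAt (fun y : ℝ => -(Real.log (1 - y ^ 2)) / 2)
          (-(-(2 * y) / (1 - y ^ 2)) / 2) y := (h2.neg).div_const 2
      convert h3 using 1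
      field_simp [hne y hy]
    have hint : IntervalIntegrable (fun y : ℝ => y * (1 - y ^ 2)⁻¹) volume 0 r := by
      apply ContinuousOn.intervalIntegrable
      exact continuousOn_id.mul ((continuousOn_const.sub (continuousOn_pow 2)).inv₀ hne)
    rw [intervalIntegral.integral_eq_sub_of_hasDerivAt hderiv hint]
    have hr2 : (0:ℝ) < 1 - r ^ 2 := by nlinarith
    rw [one_div, Real.log_inv]
    simp only [pow_two, zero_mul, sub_zero, Real.log_one, neg_zero, zero_div, sub_zero]
  rw [← key, intervalIntegral.integral_of_le hr0.le, MeasureTheory.integral_Ioc_eq_integral_Ioo]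

theorem aux_area (r : ℝ) (hr0 : 0 < r) (hr1 : r < 1) :
    ∫ z in ball (0:ℂ) r, (1 - ‖z‖ ^ 2)⁻¹ ∂volume
      = Real.pi * Real.log (1 / (1 - r ^ 2)) := by
  classical
  set g : ℝ → ℝ := fun y => if y < r then (1 - y ^ 2)⁻¹ else 0 with hg
  have h1 : ∫ z in ball (0:ℂ) r, (1 - ‖z‖ ^ 2)⁻¹ ∂volume
      = ∫ z : ℂ, g ‖z‖ ∂volume := by
    rw [← MeasureTheory.integral_indicator measurableSet_ball]
    congr 1
    ext z
    by_cases hz : z ∈ ball (0:ℂ) r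
    · have hlt : ‖z‖ < r := by
        simpa [dist_zero_right] using mem_ball.mp hz
      simp [hg, indicator_of_mem hz, hlt]
    · have hlt : ¬ ‖z‖ < r := by
        simpa [mem_ball, dist_zero_right] using hz
      simp [hg, indicator_of_notMem hz, hlt]
  rw [h1, MeasureTheory.integral_fun_norm_addHaar volume g]
  have hdim : Module.finrank ℝ ℂ = 2 := Complex.finrank_real_complex
  rw [hdim]
  have hvol : volume.real (ball (0:ℂ) 1) = Real.pi := by
    rw [measureReal_def, Complex.volume_ball]
    simp [ENNReal.toReal_mul]
  rw [hvol]
  have h2 : ∫ y in Ioi (0:ℝ), y ^ (2 - 1) • g y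
      = ∫ y in Set.Ioo (0:ℝ) r, y * (1 - y ^ 2)⁻¹ := by
    have : ∀ y : ℝ, y ^ (2-1) • g y
        = Set.indicator (Iio r) (fun y => y * (1 - y ^ 2)⁻¹) y := by
      intro y
      by_cases hy : y < r <;> simp [hg, hy, indicator, smul_eq_mul]
    simp_rw [this]
    rw [MeasureTheory.integral_indicator measurableSet_Iio,
      Measure.restrict_restrict measurableSet_Iio]
    congr 1
    rw [Set.Iio_inter_Ioi]
  rw [h2, aux_one_dim r hr0 hr1]
  simp only [smul_eq_mul, nsmul_eq_mul, Nat.cast_ofNat]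
  ring

theorem aux_E (r : ℝ) (hr0 : 0 < r) (hr1 : r < 1) :
    ∫⁻ z in ball (0:ℂ) r, ENNReal.ofReal ((1 - ‖z‖ ^ 2)⁻¹) ∂dA
      = ENNReal.ofReal (Real.log (1 / (1 - r ^ 2))) := by
  have hr2 : (0:ℝ) < 1 - r ^ 2 := by nlinarith
  have hmeas : Measurable (fun z : ℂ => (1 - ‖z‖ ^ 2)⁻¹) :=
    ((measurable_const.sub ((continuous_norm.measurable).pow_const 2)).inv)
  haveI : IsFiniteMeasure (volume.restrict (ball (0:ℂ) r)) :=
    ⟨by rw [Measure.restrict_apply_univ]; exact measure_ball_lt_top⟩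
  have hint : Integrable (fun z : ℂ => (1 - ‖z‖ ^ 2)⁻¹)
      (volume.restrict (ball (0:ℂ) r)) := by
    refine Integrable.mono' (integrable_const ((1 - r ^ 2)⁻¹)) hmeas.aestronglyMeasurable ?_
    rw [ae_restrict_iff' measurableSet_ball]
    filter_upwards with z hz
    have habs : ‖z‖ < r := by
      simpa [mem_ball, dist_zero_right] using hz
    have h1 : (0:ℝ) < 1 - ‖z‖ ^ 2 := by
      nlinarith [norm_nonneg z]
    rw [Real.norm_eq_abs, abs_of_nonneg (by positivity)]
    apply inv_anti₀ hr2
    nlinarith [norm_nonneg z]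
  have hpos : (0:ℂ → ℝ) ≤ᵐ[volume.restrict (ball (0:ℂ) r)]
      fun z : ℂ => (1 - ‖z‖ ^ 2)⁻¹ := by
    rw [Filter.EventuallyLE, ae_restrict_iff' measurableSet_ball]
    filter_upwards with z hz
    have habs : ‖z‖ < r := by
      simpa [mem_ball, dist_zero_right] using hz
    have h1 : (0:ℝ) < 1 - ‖z‖ ^ 2 := by nlinarith [norm_nonneg z]
    positivity
  have hL : ∫⁻ z in ball (0:ℂ) r, ENNReal.ofReal ((1 - ‖z‖ ^ 2)⁻¹) ∂volume
      = ENNReal.ofReal (Real.pi * Real.log (1 / (1 - r ^ 2))) := by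
    rw [← MeasureTheory.ofReal_integral_eq_lintegral_ofReal hint hpos, aux_area r hr0 hr1]
  rw [show dA = (ENNReal.ofReal Real.pi)⁻¹ • volume from rfl, Measure.restrict_smul,
    lintegral_smul_measure, hL, smul_eq_mul, ENNReal.ofReal_mul Real.pi_pos.le, ← mul_assoc,
    ENNReal.inv_mul_cancel (by simp [Real.pi_pos]) ENNReal.ofReal_ne_top, one_mul]


/-- if `0 < r < 1` and `f` is a minimizer of `ρ_{H,r}`, then
`(1/log(1/(1-r²))) ∫_{D(0,r)} |f| dA = (1/log(1/(1-r²))) ∫_{D(0,r)} |f|² (1-|z|²) dA`,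
and this common value is at most 1. -/
theorem hyperbolic_variational_identity (r : ℝ) (hr0 : 0 < r) (hr1 : r < 1)
    (f : ℂ → ℂ) (hf : IsMinH r f) :
    ((ENNReal.ofReal (Real.log (1 / (1 - r ^ 2))))⁻¹ *
        ∫⁻ z in ball (0:ℂ) r, ENNReal.ofReal (‖f z‖) ∂dA)
      = ((ENNReal.ofReal (Real.log (1 / (1 - r ^ 2))))⁻¹ *
        ∫⁻ z in ball (0:ℂ) r, ENNReal.ofReal
          (‖f z‖ ^ 2 * (1 - ‖z‖ ^ 2)) ∂dA) ∧
    ((ENNReal.ofReal (Real.log (1 / (1 - r ^ 2))))⁻¹ *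
        ∫⁻ z in ball (0:ℂ) r, ENNReal.ofReal (‖f z‖) ∂dA) ≤ 1 := by
  classical
  obtain ⟨hfd, hfmin⟩ := hf
  have hr2 : (0:ℝ) < 1 - r ^ 2 := by nlinarith
  set c : ℝ := Real.log (1 / (1 - r ^ 2)) with hcdef
  have hcpos : 0 < c := by
    apply Real.log_pos
    rw [lt_div_iff₀ hr2]
    nlinarith
  have hcne : ENNReal.ofReal c ≠ 0 := by
    simp [ENNReal.ofReal_eq_zero, not_le, hcpos]
  have hball : ∀ z ∈ ball (0:ℂ) r, ‖z‖ < r := by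
    intro z hz
    exact mem_ball_zero_iff.mp hz
  have hpos1 : ∀ z ∈ ball (0:ℂ) r, (0:ℝ) < 1 - ‖z‖ ^ 2 := by
    intro z hz
    nlinarith [hball z hz, norm_nonneg z]
  -- measurability
  have hcont : ContinuousOn f (ball (0:ℂ) r) :=
    (hfd.continuousOn).mono (ball_subset_ball hr1.le)
  have hfm : AEMeasurable f (dA.restrict (ball (0:ℂ) r)) :=
    hcont.aemeasurable measurableSet_ball
  have habs : AEMeasurable (fun z => ‖f z‖) (dA.restrict (ball (0:ℂ) r)) :=
    continuous_norm.measurable.comp_aemeasurable hfm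
  have hw : Measurable (fun z : ℂ => 1 - ‖z‖ ^ 2) :=
    measurable_const.sub (continuous_norm.measurable.pow_const 2)
  -- key quantities
  set A : ℝ≥0∞ := ∫⁻ z in ball (0:ℂ) r,
    ENNReal.ofReal (‖f z‖ ^ 2 * (1 - ‖z‖ ^ 2)) ∂dA with hAdef
  set B : ℝ≥0∞ := ∫⁻ z in ball (0:ℂ) r,
    ENNReal.ofReal (‖f z‖) ∂dA with hBdef
  set E : ℝ≥0∞ := ∫⁻ z in ball (0:ℂ) r,
    ENNReal.ofReal ((1 - ‖z‖ ^ 2)⁻¹) ∂dA with hEdef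
  set I : ℝ → ℝ≥0∞ := fun t => ∫⁻ z in ball (0:ℂ) r,
    ENNReal.ofReal (((1 - ‖z‖ ^ 2) * (t * ‖f z‖) - 1) ^ 2
      / (1 - ‖z‖ ^ 2)) ∂dA with hIdef
  have mF1 : ∀ t : ℝ, AEMeasurable (fun z =>
      ENNReal.ofReal (((1 - ‖z‖ ^ 2) * (t * ‖f z‖) - 1) ^ 2
        / (1 - ‖z‖ ^ 2))) (dA.restrict (ball (0:ℂ) r)) := by
    intro t
    exact ENNReal.measurable_ofReal.comp_aemeasurable
      ((((hw.aemeasurable.mul (habs.const_mul t)).sub aemeasurable_const).pow_const 2).div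
        hw.aemeasurable)
  have mF3 : AEMeasurable (fun z =>
      ENNReal.ofReal (‖f z‖ ^ 2 * (1 - ‖z‖ ^ 2)))
      (dA.restrict (ball (0:ℂ) r)) :=
    ENNReal.measurable_ofReal.comp_aemeasurable
      (((habs.pow_const 2).mul hw.aemeasurable))
  have mFe : Measurable (fun z : ℂ => ENNReal.ofReal ((1 - ‖z‖ ^ 2)⁻¹)) :=
    ENNReal.measurable_ofReal.comp hw.inv
  -- minimality in terms of I
  have hmin : ∀ t : ℝ, 0 ≤ t → I 1 ≤ I t := by
    intro t ht
    have hg : DifferentiableOn ℂ (fun z => (t:ℂ) * f z) (ball 0 1) :=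
      fun z hz => ((hfd z hz).const_mul _)
    have h := hfmin _ hg
    have e1 : rhoH r f = (ENNReal.ofReal c)⁻¹ * I 1 := by
      simp only [rhoH, hIdef, ← hcdef, one_mul]
    have e2 : rhoH r (fun z => (t:ℂ) * f z) = (ENNReal.ofReal c)⁻¹ * I t := by
      simp only [rhoH, hIdef, ← hcdef]
      congr 1
      apply lintegral_congr
      intro z
      rw [norm_mul, Complex.norm_real, Real.norm_of_nonneg ht]
    rw [e1, e2] at h
    exact (ENNReal.mul_le_mul_iff_right (by simp [ENNReal.ofReal_ne_top]) (by simp [hcne])).mp h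
  -- the expansion identity
  have hstar : ∀ t : ℝ, 0 ≤ t →
      I t + ENNReal.ofReal (2 * t) * B = ENNReal.ofReal (t ^ 2) * A + E := by
    intro t ht
    have hb2 : ENNReal.ofReal (2 * t) * B
        = ∫⁻ z in ball (0:ℂ) r, ENNReal.ofReal (2 * t * ‖f z‖) ∂dA := by
      rw [hBdef, ← lintegral_const_mul' _ _ ENNReal.ofReal_ne_top]
      exact lintegral_congr fun z => (ENNReal.ofReal_mul (by positivity)).symm
    have hA2 : ENNReal.ofReal (t ^ 2) * A
        = ∫⁻ z in ball (0:ℂ) r,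
            ENNReal.ofReal (t ^ 2 * (‖f z‖ ^ 2 * (1 - ‖z‖ ^ 2))) ∂dA := by
      rw [hAdef, ← lintegral_const_mul' _ _ ENNReal.ofReal_ne_top]
      exact lintegral_congr fun z => (ENNReal.ofReal_mul (by positivity)).symm
    have mF3' : AEMeasurable (fun z =>
        ENNReal.ofReal (t ^ 2 * (‖f z‖ ^ 2 * (1 - ‖z‖ ^ 2))))
        (dA.restrict (ball (0:ℂ) r)) := by
      exact ENNReal.measurable_ofReal.comp_aemeasurable
        ((((habs.pow_const 2).mul hw.aemeasurable)).const_mul (t ^ 2))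
    rw [hb2, hA2, hIdef, hEdef,
      ← lintegral_add_left' (mF1 t),
      ← lintegral_add_left' mF3']
    apply setLIntegral_congr_fun measurableSet_ball
    intro z hz
    have h1 : (0:ℝ) < 1 - ‖z‖ ^ 2 := hpos1 z hz
    have hb0 : (0:ℝ) ≤ ‖f z‖ := norm_nonneg _
    beta_reduce
    rw [← ENNReal.ofReal_add (by positivity) (by positivity),
      ← ENNReal.ofReal_add (by positivity) (by positivity)]
    congr 1
    field_simp
    ring
  -- value of E, finiteness
  have hE : E = ENNReal.ofReal c := aux_E r hr0 hr1
  have hEne : E ≠ ∞ := by rw [hE]; exact ENNReal.ofReal_ne_top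
  have hI0 : I 0 = E := by
    rw [hIdef, hEdef]
    apply setLIntegral_congr_fun measurableSet_ball
    intro z hz
    norm_num
  have hI1le : I 1 ≤ E := by
    have h := hmin 0 le_rfl
    rwa [hI0] at h
  have hI1ne : I 1 ≠ ∞ := ne_top_of_le_ne_top hEne hI1le
  -- A is finite
  have hAne : A ≠ ∞ := by
    have hpt : ∀ z ∈ ball (0:ℂ) r,
        ENNReal.ofReal (‖f z‖ ^ 2 * (1 - ‖z‖ ^ 2))
          ≤ 2 * ENNReal.ofReal (((1 - ‖z‖ ^ 2) * (1 * ‖f z‖) - 1) ^ 2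
              / (1 - ‖z‖ ^ 2))
            + 2 * ENNReal.ofReal ((1 - ‖z‖ ^ 2)⁻¹) := by
      intro z hz
      have h1 : (0:ℝ) < 1 - ‖z‖ ^ 2 := hpos1 z hz
      have hb0 : (0:ℝ) ≤ ‖f z‖ := norm_nonneg _
      calc ENNReal.ofReal (‖f z‖ ^ 2 * (1 - ‖z‖ ^ 2))
          ≤ ENNReal.ofReal (2 * (((1 - ‖z‖ ^ 2) * (1 * ‖f z‖) - 1) ^ 2
              / (1 - ‖z‖ ^ 2)) + 2 * (1 - ‖z‖ ^ 2)⁻¹) := by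
            apply ENNReal.ofReal_le_ofReal
            have h2 : 2 * (((1 - ‖z‖ ^ 2) * (1 * ‖f z‖) - 1) ^ 2
                  / (1 - ‖z‖ ^ 2)) + 2 * (1 - ‖z‖ ^ 2)⁻¹
                = (2 * ((1 - ‖z‖ ^ 2) * ‖f z‖ - 1) ^ 2 + 2)
                  / (1 - ‖z‖ ^ 2) := by
              field_simp
            rw [h2, le_div_iff₀ h1]
            nlinarith [sq_nonneg ((1 - ‖z‖ ^ 2) * ‖f z‖ - 2)]
        _ = 2 * ENNReal.ofReal (((1 - ‖z‖ ^ 2) * (1 * ‖f z‖) - 1) ^ 2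
              / (1 - ‖z‖ ^ 2)) + 2 * ENNReal.ofReal ((1 - ‖z‖ ^ 2)⁻¹) := by
            rw [ENNReal.ofReal_add (by positivity) (by positivity),
              ENNReal.ofReal_mul (by norm_num), ENNReal.ofReal_mul (by norm_num)]
            norm_num
    have hle : A ≤ 2 * I 1 + 2 * E := by
      rw [hAdef, hIdef, hEdef, ← lintegral_const_mul' _ _ (by norm_num : (2:ℝ≥0∞) ≠ ⊤),
        ← lintegral_const_mul' _ _ (by norm_num : (2:ℝ≥0∞) ≠ ⊤),
        ← lintegral_add_left' ((mF1 1).const_mul 2)]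
      apply lintegral_mono_ae
      rw [ae_restrict_iff' measurableSet_ball]
      exact ae_of_all _ hpt
    exact ne_top_of_le_ne_top (by
      exact ENNReal.add_ne_top.mpr ⟨ENNReal.mul_ne_top (by norm_num) hI1ne,
        ENNReal.mul_ne_top (by norm_num) hEne⟩) hle
  -- B is finite
  have hBne : B ≠ ∞ := by
    have h := hstar 1 zero_le_one
    have h2 : ENNReal.ofReal (2 * 1) * B ≤ ENNReal.ofReal (1 ^ 2) * A + E := by
      rw [← h]; exact le_add_self
    intro hB
    rw [hB] at h2
    have : ENNReal.ofReal (2 * 1) * ⊤ = ⊤ := by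
      rw [ENNReal.mul_top (by norm_num)]
    rw [this] at h2
    exact (ENNReal.add_ne_top.mpr ⟨ENNReal.mul_ne_top ENNReal.ofReal_ne_top hAne, hEne⟩)
      (top_le_iff.mp h2)
  -- finiteness of I t
  have hItne : ∀ t : ℝ, 0 ≤ t → I t ≠ ∞ := by
    intro t ht
    have h := hstar t ht
    have h2 : I t ≤ ENNReal.ofReal (t ^ 2) * A + E := by
      rw [← h]; exact le_self_add
    exact ne_top_of_le_ne_top
      (ENNReal.add_ne_top.mpr ⟨ENNReal.mul_ne_top ENNReal.ofReal_ne_top hAne, hEne⟩) h2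
  -- pass to real numbers
  set A' : ℝ := A.toReal with hA'
  set B' : ℝ := B.toReal with hB'
  set E' : ℝ := E.toReal with hE'
  have hreal : ∀ t : ℝ, 0 ≤ t → (I t).toReal + 2 * t * B' = t ^ 2 * A' + E' := by
    intro t ht
    have h := congrArg ENNReal.toReal (hstar t ht)
    rw [ENNReal.toReal_add (hItne t ht) (ENNReal.mul_ne_top ENNReal.ofReal_ne_top hBne),
      ENNReal.toReal_add (ENNReal.mul_ne_top ENNReal.ofReal_ne_top hAne) hEne,
      ENNReal.toReal_mul, ENNReal.toReal_mul,
      ENNReal.toReal_ofReal (by positivity), ENNReal.toReal_ofReal (by positivity)] at h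
    linarith [h]
  have hJle : ∀ t : ℝ, 0 ≤ t → (I 1).toReal ≤ (I t).toReal := by
    intro t ht
    exact ENNReal.toReal_mono (hItne t ht) (hmin t ht)
  have hq : ∀ t : ℝ, 0 ≤ t → A' - 2 * B' ≤ t ^ 2 * A' - 2 * t * B' := by
    intro t ht
    have h1 := hreal 1 zero_le_one
    have h2 := hreal t ht
    have h3 := hJle t ht
    nlinarith [h1, h2, h3]
  have hA'0 : 0 ≤ A' := ENNReal.toReal_nonneg
  have hB'0 : 0 ≤ B' := ENNReal.toReal_nonneg
  have hAB : A' = B' := by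
    rcases eq_or_lt_of_le hA'0 with h | h
    · have h2 := hq 2 (by norm_num)
      nlinarith [h2, hB'0]
    · have ht0 : 0 ≤ B' / A' := div_nonneg hB'0 h.le
      have h2 := hq (B' / A') ht0
      have key : (B' / A') ^ 2 * A' - 2 * (B' / A') * B' = -(B' ^ 2) / A' := by
        field_simp
        ring
      rw [key] at h2
      have h3 : (A' - 2 * B') * A' ≤ -(B' ^ 2) := (le_div_iff₀ h).mp h2
      nlinarith [sq_nonneg (A' - B')]
  have hB'E' : B' ≤ E' := by
    have h1 := hreal 1 zero_le_one
    have h0 : 0 ≤ (I 1).toReal := ENNReal.toReal_nonneg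
    nlinarith [h1, h0, hAB]
  have hE'c : E' = c := by rw [hE', hE, ENNReal.toReal_ofReal hcpos.le]
  have hBeq : B = ENNReal.ofReal B' := (ENNReal.ofReal_toReal hBne).symm
  have hAeq : A = ENNReal.ofReal A' := (ENNReal.ofReal_toReal hAne).symm
  constructor
  · rw [hBeq, hAeq, hAB]
  · rw [hBeq]
    have hle : ENNReal.ofReal B' ≤ ENNReal.ofReal c := by
      apply ENNReal.ofReal_le_ofReal
      rw [← hE'c]
      exact hB'E'
    calc (ENNReal.ofReal c)⁻¹ * ENNReal.ofReal B'
        ≤ (ENNReal.ofReal c)⁻¹ * ENNReal.ofReal c := by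
          exact mul_le_mul_right hle _
      _ = 1 := ENNReal.inv_mul_cancel hcne ENNReal.ofReal_ne_top
end

section
/- If 0 < r < 1 and f is a minimizer of ρ_{H,r}, then ρ_{H,r}(f) = 1 − (1/log(1/(1−r²))) ∫_{D(0,r)} |f(z)| dA(z). -/
open MeasureTheory Filter Set Metric Polynomial
open scoped ENNReal Topology NNReal

private lemma radial_ftc {r : ℝ} (hr0 : 0 < r) (hr1 : r < 1) :
    ∫ y in (0:ℝ)..r, y / (1 - y ^ 2) = -(1/2) * Real.log (1 - r ^ 2) := by
  have hcc : ∀ y ∈ uIcc (0:ℝ) r, (1:ℝ) - y ^ 2 ≠ 0 := by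
    intro y hy
    rw [uIcc_of_le hr0.le] at hy
    have h2 : y ^ 2 < 1 := by nlinarith [hy.1, hy.2]
    linarith
  have hderiv : ∀ y ∈ uIcc (0:ℝ) r,
      HasDerivAt (fun y : ℝ => -(1/2) * Real.log (1 - y ^ 2)) (y / (1 - y ^ 2)) y := by
    intro y hy
    have h1 : (1:ℝ) - y ^ 2 ≠ 0 := hcc y hy
    have hd : HasDerivAt (fun y : ℝ => 1 - y ^ 2) (-(2 * y)) y := by
      simpa using ((hasDerivAt_pow 2 y).const_sub 1)
    have hlog := (Real.hasDerivAt_log h1).comp y hd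
    have := hlog.const_mul (-(1/2 : ℝ))
    exact this.congr_deriv (by ring)
  have hcont : ContinuousOn (fun y : ℝ => y / (1 - y ^ 2)) (uIcc (0:ℝ) r) :=
    ContinuousOn.div continuousOn_id
      ((continuous_const.sub (continuous_pow 2)).continuousOn) hcc
  rw [intervalIntegral.integral_eq_sub_of_hasDerivAt hderiv hcont.intervalIntegrable]
  simp

private lemma lintegral_one_div_one_sub_sq {r : ℝ} (hr0 : 0 < r) (hr1 : r < 1) :
    ∫⁻ z in ball (0:ℂ) r, ENNReal.ofReal (1 / (1 - ‖z‖ ^ 2)) ∂dA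
      = ENNReal.ofReal (Real.log (1 / (1 - r ^ 2))) := by
  have hmb : MeasurableSet (ball (0:ℂ) r) := measurableSet_ball
  have hcont : ContinuousOn (fun z : ℂ => 1 / (1 - ‖z‖ ^ 2)) (closedBall (0:ℂ) r) := by
    apply ContinuousOn.div continuousOn_const
    · exact (continuous_const.sub (continuous_norm.pow 2)).continuousOn
    · intro z hz
      have h1 : ‖z‖ ≤ r := by simpa [Complex.dist_eq] using hz
      have : ‖z‖ ^ 2 < 1 := by nlinarith [norm_nonneg z]
      linarith
  have hint : IntegrableOn (fun z : ℂ => 1 / (1 - ‖z‖ ^ 2)) (ball (0:ℂ) r) volume :=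
    (hcont.integrableOn_compact (isCompact_closedBall _ _)).mono_set ball_subset_closedBall
  have hnn : 0 ≤ᵐ[volume.restrict (ball (0:ℂ) r)]
      fun z : ℂ => 1 / (1 - ‖z‖ ^ 2) := by
    refine (ae_restrict_iff' hmb).2 (ae_of_all _ fun z hz => ?_)
    have h1 : ‖z‖ < r := by simpa [Complex.dist_eq] using hz
    have h2 : ‖z‖ ^ 2 < 1 := by nlinarith [norm_nonneg z]
    have h3 : (0:ℝ) < 1 - ‖z‖ ^ 2 := by linarith
    positivity
  have hval : ∫ z in ball (0:ℂ) r, (1 / (1 - ‖z‖ ^ 2)) ∂volume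
      = Real.pi * Real.log (1 / (1 - r ^ 2)) := by
    have hind : (fun z : ℂ =>
          (ball (0:ℂ) r).indicator (fun z : ℂ => 1 / (1 - ‖z‖ ^ 2)) z)
        = fun z : ℂ => (Iio r).indicator (fun y : ℝ => 1 / (1 - y ^ 2)) ‖z‖ := by
      funext z
      by_cases h : ‖z‖ < r
      · rw [indicator_of_mem (by simpa [Complex.dist_eq] using h),
          indicator_of_mem (by exact h)]
      · rw [indicator_of_notMem (by simpa [Complex.dist_eq] using h),
          indicator_of_notMem (by exact h)]
    rw [← integral_indicator hmb, hind,
      MeasureTheory.integral_fun_norm_addHaar (volume : Measure ℂ)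
        ((Iio r).indicator (fun y : ℝ => 1 / (1 - y ^ 2)))]
    have hradf : (fun y : ℝ =>
          y ^ (Module.finrank ℝ ℂ - 1) • (Iio r).indicator (fun y : ℝ => 1 / (1 - y ^ 2)) y)
        = (Iio r).indicator (fun y : ℝ => y / (1 - y ^ 2)) := by
      funext y
      by_cases h : y ∈ Iio r
      · rw [indicator_of_mem h, indicator_of_mem h]
        simp [Complex.finrank_real_complex, smul_eq_mul]
        ring
      · rw [indicator_of_notMem h, indicator_of_notMem h, smul_zero]
    rw [hradf, setIntegral_indicator measurableSet_Iio, Ioi_inter_Iio,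
      ← MeasureTheory.integral_Ioc_eq_integral_Ioo,
      ← intervalIntegral.integral_of_le hr0.le, radial_ftc hr0 hr1]
    have hpos : (0:ℝ) < 1 - r ^ 2 := by nlinarith
    have hlog : Real.log (1 / (1 - r ^ 2)) = -Real.log (1 - r ^ 2) := by
      rw [one_div, Real.log_inv]
    rw [hlog]
    simp [Complex.finrank_real_complex, measureReal_def, Complex.volume_ball, nsmul_eq_mul, smul_eq_mul]
    ring
  rw [show (dA.restrict (ball (0:ℂ) r))
      = (ENNReal.ofReal Real.pi)⁻¹ • (volume.restrict (ball (0:ℂ) r)) by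
    rw [dA, Measure.restrict_smul]]
  rw [lintegral_smul_measure, ← MeasureTheory.ofReal_integral_eq_lintegral_ofReal hint hnn, hval,
    ENNReal.ofReal_mul Real.pi_pos.le, smul_eq_mul, ← mul_assoc,
    ENNReal.inv_mul_cancel (by simpa using Real.pi_pos) ENNReal.ofReal_ne_top, one_mul]

private lemma min_quadratic {a' b' : ℝ} (ha0 : 0 ≤ a') (hb0 : 0 ≤ b')
    (h0 : ∀ s : ℝ, 0 ≤ s → a' - 2*b' ≤ s^2*a' - 2*s*b') : a' = b' := by
  rcases eq_or_lt_of_le ha0 with h | h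
  · have hb' : b' = 0 := le_antisymm (by nlinarith [h0 2 (by norm_num)]) hb0
    rw [← h, hb']
  · have ht : 0 ≤ b'/a' := div_nonneg hb0 h.le
    have htt : (b'/a') * a' = b' := div_mul_cancel₀ b' h.ne'
    have h1 := h0 (b'/a') ht
    have h2 : a' * (a' - 2*b') ≤ a' * ((b'/a')^2*a' - 2*(b'/a')*b') :=
      mul_le_mul_of_nonneg_left h1 h.le
    have h3 : a' * ((b'/a')^2*a' - 2*(b'/a')*b') = -(b'^2) := by
      field_simp
      ring
    have h4 : (a' - b')^2 ≤ 0 := by nlinarith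
    have h5 : (a' - b')^2 = 0 := le_antisymm h4 (sq_nonneg _)
    have h6 : a' - b' = 0 := by
      exact pow_eq_zero_iff two_ne_zero |>.mp h5
    linarith

/-- if `0 < r < 1` and `f` is a minimizer of `ρ_{H,r}`, then
`ρ_{H,r}(f) = 1 - (1/log(1/(1-r²))) ∫_{D(0,r)} |f| dA`. -/
theorem hyperbolic_minimizer_value (r : ℝ) (hr0 : 0 < r) (hr1 : r < 1)
    (f : ℂ → ℂ) (hf : IsMinH r f) :
    rhoH r f = 1 - (ENNReal.ofReal (Real.log (1 / (1 - r ^ 2))))⁻¹ *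
        ∫⁻ z in ball (0:ℂ) r, ENNReal.ofReal (‖f z‖) ∂dA := by
  obtain ⟨hf1, hf2⟩ := hf
  have hrsq : (0:ℝ) < 1 - r ^ 2 := by nlinarith
  set L := Real.log (1 / (1 - r ^ 2)) with hLdef
  have hL : 0 < L := Real.log_pos ((one_lt_div hrsq).mpr (by nlinarith))
  set C : ℝ≥0∞ := ENNReal.ofReal L with hCdef
  have hC0 : C ≠ 0 := (ENNReal.ofReal_pos.mpr hL).ne'
  have hCt : C ≠ ⊤ := ENNReal.ofReal_ne_top
  have hmb : MeasurableSet (ball (0:ℂ) r) := measurableSet_ball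
  have hbpos : ∀ z ∈ ball (0:ℂ) r, (0:ℝ) < 1 - ‖z‖ ^ 2 := by
    intro z hz
    have h1 : ‖z‖ < r := by simpa [Complex.dist_eq] using hz
    nlinarith [norm_nonneg z]
  have haf : AEMeasurable (fun z => ‖f z‖) (dA.restrict (ball (0:ℂ) r)) := by
    have : ContinuousOn (fun z => ‖f z‖) (ball (0:ℂ) r) :=
      continuous_norm.comp_continuousOn
        (hf1.continuousOn.mono (ball_subset_ball hr1.le))
    exact this.aemeasurable hmb
  set I : ℝ → ℝ≥0∞ := fun s =>
    ∫⁻ z in ball (0:ℂ) r, ENNReal.ofReal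
      (((1 - ‖z‖ ^ 2) * (s * ‖f z‖) - 1) ^ 2
        / (1 - ‖z‖ ^ 2)) ∂dA with hIdef
  set A : ℝ≥0∞ := ∫⁻ z in ball (0:ℂ) r,
      ENNReal.ofReal ((1 - ‖z‖ ^ 2) * ‖f z‖ ^ 2) ∂dA with hAdef
  set B : ℝ≥0∞ := ∫⁻ z in ball (0:ℂ) r,
      ENNReal.ofReal (‖f z‖) ∂dA with hBdef
  have hCeq : ∫⁻ z in ball (0:ℂ) r,
      ENNReal.ofReal (1 / (1 - ‖z‖ ^ 2)) ∂dA = C := by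
    rw [hCdef, hLdef]; exact lintegral_one_div_one_sub_sq hr0 hr1
  have hQmeas : Measurable fun z : ℂ => ENNReal.ofReal (1 / (1 - ‖z‖ ^ 2)) :=
    (measurable_const.div (measurable_const.sub
      ((continuous_norm.measurable).pow_const 2))).ennreal_ofReal
  -- the basic algebraic identity, integrated
  have key : ∀ s : ℝ, 0 ≤ s →
      I s + ENNReal.ofReal (2*s) * B = ENNReal.ofReal (s^2) * A + C := by
    intro s hs
    have hsplit1 : I s + ENNReal.ofReal (2*s) * B
        = ∫⁻ z in ball (0:ℂ) r,
            (ENNReal.ofReal (((1 - ‖z‖ ^ 2) * (s * ‖f z‖) - 1) ^ 2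
              / (1 - ‖z‖ ^ 2))
            + ENNReal.ofReal (2*s) * ENNReal.ofReal (‖f z‖)) ∂dA := by
      rw [lintegral_add_right' _ ((haf.ennreal_ofReal).const_mul _),
        lintegral_const_mul' _ _ ENNReal.ofReal_ne_top]
    have hsplit2 : ∫⁻ z in ball (0:ℂ) r,
          (ENNReal.ofReal (s^2)
              * ENNReal.ofReal ((1 - ‖z‖ ^ 2) * ‖f z‖ ^ 2)
            + ENNReal.ofReal (1 / (1 - ‖z‖ ^ 2))) ∂dA
        = ENNReal.ofReal (s^2) * A + C := by
      rw [lintegral_add_right' _ hQmeas.aemeasurable,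
        lintegral_const_mul' _ _ ENNReal.ofReal_ne_top, hCeq]
    rw [hsplit1, ← hsplit2]
    refine setLIntegral_congr_fun hmb (fun z hz => ?_)
    have hb := hbpos z hz
    have ha := norm_nonneg (f z)
    rw [← ENNReal.ofReal_mul (by positivity), ← ENNReal.ofReal_mul (by positivity),
      ← ENNReal.ofReal_add (by positivity) (by positivity),
      ← ENNReal.ofReal_add (by positivity) (by positivity)]
    congr 1
    field_simp
    ring
  -- rewriting rhoH of scaled functions
  have hrhoH : ∀ s : ℝ, 0 ≤ s → rhoH r (fun z => (s:ℂ) * f z) = C⁻¹ * I s := by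
    intro s hs
    rw [rhoH, ← hLdef, ← hCdef, hIdef]
    congr 1
    refine lintegral_congr fun z => ?_
    rw [norm_mul, Complex.norm_real, Real.norm_eq_abs, abs_of_nonneg hs]
  have hrho_f : rhoH r f = C⁻¹ * I 1 := by
    rw [rhoH, ← hLdef, ← hCdef, hIdef]
    congr 1
    refine lintegral_congr fun z => ?_
    rw [one_mul]
  have hrho0 : rhoH r (fun _ : ℂ => (0:ℂ)) = 1 := by
    rw [rhoH, ← hLdef, ← hCdef]
    have : ∀ z : ℂ, ENNReal.ofReal
        (((1 - ‖z‖ ^ 2) * ‖(0:ℂ)‖ - 1) ^ 2 / (1 - ‖z‖ ^ 2))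
        = ENNReal.ofReal (1 / (1 - ‖z‖ ^ 2)) := by
      intro z; norm_num
    rw [lintegral_congr this, hCeq, ENNReal.inv_mul_cancel hC0 hCt]
  -- the minimizer comparison
  have hmin : ∀ s : ℝ, 0 ≤ s → I 1 ≤ I s := by
    intro s hs
    have h := hf2 (fun z => (s:ℂ) * f z) (hf1.const_mul _)
    rw [hrho_f, hrhoH s hs] at h
    calc I 1 = C * (C⁻¹ * I 1) := by
          rw [← mul_assoc, ENNReal.mul_inv_cancel hC0 hCt, one_mul]
      _ ≤ C * (C⁻¹ * I s) := mul_le_mul_right h C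
      _ = I s := by rw [← mul_assoc, ENNReal.mul_inv_cancel hC0 hCt, one_mul]
  -- finiteness
  have hI1C : I 1 ≤ C := by
    have h := hf2 (fun _ => 0) (differentiableOn_const 0)
    rw [hrho_f, hrho0] at h
    calc I 1 = C * (C⁻¹ * I 1) := by
          rw [← mul_assoc, ENNReal.mul_inv_cancel hC0 hCt, one_mul]
      _ ≤ C * 1 := mul_le_mul_right h C
      _ = C := mul_one C
  have hI1t : I 1 ≠ ⊤ := ne_top_of_le_ne_top hCt hI1C
  have hA_le : A ≤ 2 * I 1 + 2 * C := by
    have hmono : A ≤ ∫⁻ z in ball (0:ℂ) r,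
        (2 * ENNReal.ofReal (((1 - ‖z‖ ^ 2) * (1 * ‖f z‖) - 1) ^ 2
            / (1 - ‖z‖ ^ 2))
          + 2 * ENNReal.ofReal (1 / (1 - ‖z‖ ^ 2))) ∂dA := by
      rw [hAdef]
      refine setLIntegral_mono' hmb fun z hz => ?_
      have hb := hbpos z hz
      have ha := norm_nonneg (f z)
      rw [← ENNReal.ofReal_ofNat 2, ← ENNReal.ofReal_mul (by norm_num),
        ← ENNReal.ofReal_mul (by norm_num), ← ENNReal.ofReal_add (by positivity) (by positivity)]
      refine ENNReal.ofReal_le_ofReal ?_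
      have hkey : 2 * (((1 - ‖z‖ ^ 2) * (1 * ‖f z‖) - 1) ^ 2
            / (1 - ‖z‖ ^ 2)) + 2 * (1 / (1 - ‖z‖ ^ 2))
          - (1 - ‖z‖ ^ 2) * ‖f z‖ ^ 2
          = ((1 - ‖z‖ ^ 2) * ‖f z‖ - 2) ^ 2
            / (1 - ‖z‖ ^ 2) := by
        field_simp
        ring
      nlinarith [div_nonneg (sq_nonneg ((1 - ‖z‖ ^ 2) * ‖f z‖ - 2)) hb.le]
    calc A ≤ _ := hmono
      _ = 2 * I 1 + 2 * C := by
        rw [lintegral_add_right' _ (hQmeas.aemeasurable.const_mul _),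
          lintegral_const_mul' _ _ (by norm_num), lintegral_const_mul' _ _ (by norm_num),
          hCeq, hIdef]
  have hAt : A ≠ ⊤ := ne_top_of_le_ne_top
    (by exact ENNReal.add_ne_top.2 ⟨ENNReal.mul_ne_top (by norm_num) hI1t,
        ENNReal.mul_ne_top (by norm_num) hCt⟩) hA_le
  have e1 : I 1 + 2 * B = A + C := by
    have := key 1 zero_le_one
    norm_num at this
    exact this
  have hBt : B ≠ ⊤ := by
    have h1 : B ≤ A + C := by
      calc B ≤ I 1 + 2 * B := by
            calc B ≤ 2 * B := by
                  nth_rewrite 1 [← one_mul B]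
                  exact mul_le_mul_left one_le_two B
              _ ≤ I 1 + 2 * B := le_add_self
        _ = A + C := e1
    exact ne_top_of_le_ne_top (ENNReal.add_ne_top.2 ⟨hAt, hCt⟩) h1
  have hIst : ∀ s : ℝ, 0 ≤ s → I s ≠ ⊤ := by
    intro s hs
    have hle : I s ≤ ENNReal.ofReal (s^2) * A + C := by
      calc I s ≤ I s + ENNReal.ofReal (2*s) * B := le_add_of_nonneg_right zero_le
        _ = ENNReal.ofReal (s^2) * A + C := key s hs
    exact ne_top_of_le_ne_top (ENNReal.add_ne_top.2
      ⟨ENNReal.mul_ne_top ENNReal.ofReal_ne_top hAt, hCt⟩) hle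
  -- pass to real numbers
  have hIta : ∀ s : ℝ, 0 ≤ s → (I s).toReal = s^2 * A.toReal + L - 2*s * B.toReal := by
    intro s hs
    have e := congrArg ENNReal.toReal (key s hs)
    rw [ENNReal.toReal_add (hIst s hs) (ENNReal.mul_ne_top ENNReal.ofReal_ne_top hBt),
      ENNReal.toReal_add (ENNReal.mul_ne_top ENNReal.ofReal_ne_top hAt) hCt,
      ENNReal.toReal_mul, ENNReal.toReal_mul, ENNReal.toReal_ofReal (by positivity),
      ENNReal.toReal_ofReal (by positivity), hCdef, ENNReal.toReal_ofReal hL.le] at e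
    linarith
  have hab : A.toReal = B.toReal := by
    refine min_quadratic ENNReal.toReal_nonneg ENNReal.toReal_nonneg fun s hs => ?_
    have h := ENNReal.toReal_mono (hIst s hs) (hmin s hs)
    rw [hIta 1 zero_le_one, hIta s hs] at h
    nlinarith
  have hAB : A = B := (ENNReal.toReal_eq_toReal_iff' hAt hBt).mp hab
  rw [hAB] at e1
  have hIB : I 1 + B = C := by
    refine WithTop.add_right_cancel hBt ?_
    calc (I 1 + B) + B = I 1 + 2 * B := by rw [add_assoc, two_mul]
      _ = B + C := e1
      _ = C + B := add_comm B C
  rw [hrho_f]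
  refine ENNReal.eq_sub_of_add_eq (ENNReal.mul_ne_top (ENNReal.inv_ne_top.2 hC0) hBt) ?_
  rw [← mul_add, hIB, ENNReal.inv_mul_cancel hC0 hCt]
end

section
/- Hyperbolic L¹-non-concentration: if 0 < r < 1, 0 < δ < 1 and f is a minimizer of ρ_{H,r}, then (1/log(1/(1−r²))) ∫_{𝔸(r(1−δ), r)} |f(z)| dA(z) ≤ (1 − log(1/(1−r²(1−δ)²)) / log(1/(1−r²)))^{1/2}. In particular, if for each r one takes δ = 1−r and f_r a minimizer of ρ_{H,r}, then (1/log(1/(1−r²))) ∫_{𝔸(r(1−δ), r)} |f_r(z)| dA(z) → 0 as r → 1⁻. -/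
open MeasureTheory Filter Set Metric Polynomial
open scoped ENNReal Topology NNReal

lemma interval_int (ρ : ℝ) (h0 : 0 ≤ ρ) (h1 : ρ < 1) :
    ∫ y in (0:ℝ)..ρ, y * (1 - y ^ 2)⁻¹ = Real.log (1 / (1 - ρ ^ 2)) / 2 := by
  have key : ∀ y ∈ uIcc (0:ℝ) ρ, HasDerivAt (fun y => -(Real.log (1 - y ^ 2)) / 2)
      (y * (1 - y ^ 2)⁻¹) y := by
    intro y hy
    rw [uIcc_of_le h0] at hy
    have hy2 : 1 - y ^ 2 ≠ 0 := by nlinarith [hy.1, hy.2]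
    have h1 : HasDerivAt (fun y : ℝ => 1 - y ^ 2) (-(2 * y)) y := by
      simpa using ((hasDerivAt_pow 2 y).const_sub 1)
    have h2 := (h1.log hy2).neg.div_const 2
    refine h2.congr_deriv ?_
    ring
  have hcont : ContinuousOn (fun y : ℝ => y * (1 - y ^ 2)⁻¹) (uIcc 0 ρ) := by
    apply ContinuousOn.mul continuousOn_id
    apply ContinuousOn.inv₀ (by fun_prop)
    intro y hy
    rw [uIcc_of_le h0] at hy
    nlinarith [hy.1, hy.2]
  rw [intervalIntegral.integral_eq_sub_of_hasDerivAt key (hcont.intervalIntegrable)]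
  have : (0:ℝ) < 1 - ρ ^ 2 := by nlinarith
  rw [one_div, Real.log_inv]
  simp [neg_div]

lemma radial_int (ρ : ℝ) (h0 : 0 ≤ ρ) (h1 : ρ < 1) :
    ∫ z in ball (0:ℂ) ρ, (1 - ‖z‖ ^ 2)⁻¹ ∂volume
      = Real.pi * Real.log (1 / (1 - ρ ^ 2)) := by
  have hind : ∀ z : ℂ, (ball (0:ℂ) ρ).indicator (fun z => (1 - ‖z‖ ^ 2)⁻¹) z
      = (Iio ρ).indicator (fun t => (1 - t ^ 2)⁻¹) ‖z‖ := by
    intro z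
    by_cases hz : ‖z‖ < ρ
    · rw [indicator_of_mem (mem_ball_zero_iff.2 hz), indicator_of_mem (mem_Iio.2 hz)]
    · rw [indicator_of_notMem (fun h => hz (mem_ball_zero_iff.1 h)), indicator_of_notMem (fun h => hz (mem_Iio.1 h))]
  rw [← integral_indicator measurableSet_ball]
  simp_rw [hind]
  rw [MeasureTheory.integral_fun_norm_addHaar (volume : Measure ℂ)
    ((Iio ρ).indicator (fun t => (1 - t ^ 2)⁻¹))]
  have hdim : Module.finrank ℝ ℂ = 2 := Complex.finrank_real_complex
  rw [hdim]
  have hvol : (volume : Measure ℂ).real (ball 0 1) = Real.pi := by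
    rw [measureReal_def, Complex.volume_ball]
    simp [Real.pi_nonneg]
  rw [hvol]
  have : ∫ y in Ioi (0:ℝ), y ^ (2 - 1) • (Iio ρ).indicator (fun t => (1 - t ^ 2)⁻¹) y
      = Real.log (1 / (1 - ρ ^ 2)) / 2 := by
    simp_rw [show (2:ℕ)-1 = 1 by norm_num, pow_one, smul_eq_mul, ← indicator_mul_right _ (fun y : ℝ => y)]
    rw [setIntegral_indicator measurableSet_Iio, Ioi_inter_Iio, ← integral_Ioc_eq_integral_Ioo,
      ← intervalIntegral.integral_of_le h0]
    exact interval_int ρ h0 h1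
  rw [this, nsmul_eq_mul, smul_eq_mul]
  ring

lemma dA_restrict (s : Set ℂ) (g : ℂ → ℝ≥0∞) :
    ∫⁻ z in s, g z ∂dA = (ENNReal.ofReal Real.pi)⁻¹ * ∫⁻ z in s, g z ∂volume := by
  rw [dA, Measure.restrict_smul, lintegral_smul_measure, smul_eq_mul]

lemma ball_linteg (ρ : ℝ) (h0 : 0 ≤ ρ) (h1 : ρ < 1) :
    ∫⁻ z in ball (0:ℂ) ρ, ENNReal.ofReal ((1 - ‖z‖ ^ 2)⁻¹) ∂dA
      = ENNReal.ofReal (Real.log (1 / (1 - ρ ^ 2))) := by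
  rw [dA_restrict]
  have hint : IntegrableOn (fun z : ℂ => (1 - ‖z‖ ^ 2)⁻¹) (ball (0:ℂ) ρ) volume := by
    apply IntegrableOn.mono_set (s := ball 0 ρ) (t := closedBall (0:ℂ) ρ) _ ball_subset_closedBall
    apply ContinuousOn.integrableOn_compact (isCompact_closedBall _ _)
    apply ContinuousOn.inv₀ ((continuous_const.sub (continuous_norm.pow 2)).continuousOn)
    intro z hz
    have : ‖z‖ ≤ ρ := by
      exact mem_closedBall_zero_iff.1 hz
    have h2 : ‖z‖ ^ 2 < 1 := by nlinarith [norm_nonneg z]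
    exact ne_of_gt (by show (0:ℝ) < 1 - ‖z‖ ^ 2; nlinarith)
  have hnn : 0 ≤ᵐ[volume.restrict (ball (0:ℂ) ρ)] fun z : ℂ => (1 - ‖z‖ ^ 2)⁻¹ := by
    refine (ae_restrict_iff' measurableSet_ball).2 (ae_of_all _ fun z hz => ?_)
    have : ‖z‖ < ρ := by
      exact mem_ball_zero_iff.1 hz
    have h2 : ‖z‖ ^ 2 < 1 := by nlinarith [norm_nonneg z]
    have : (0:ℝ) < 1 - ‖z‖ ^ 2 := by nlinarith
    positivity
  rw [← ofReal_integral_eq_lintegral_ofReal hint hnn, radial_int ρ h0 h1,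
    ENNReal.ofReal_mul Real.pi_nonneg, ← mul_assoc,
    ENNReal.inv_mul_cancel (ENNReal.ofReal_pos.2 Real.pi_pos).ne' ENNReal.ofReal_ne_top, one_mul]

lemma ball_ae_closedBall (ρ : ℝ) : (ball (0:ℂ) ρ : Set ℂ) =ᵐ[dA] closedBall (0:ℂ) ρ := by
  have hs : dA (sphere (0:ℂ) ρ) = 0 := by
    rw [dA]
    simp [Measure.addHaar_sphere]
  refine (MeasureTheory.ae_eq_set).2 ⟨?_, ?_⟩
  · rw [diff_eq_empty.2 ball_subset_closedBall]; simp
  · rw [closedBall_diff_ball]; exact hs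

lemma ann_linteg (s t : ℝ) (h0 : 0 ≤ s) (hst : s < t) (h1 : t < 1) :
    ∫⁻ z in ann s t, ENNReal.ofReal ((1 - ‖z‖ ^ 2)⁻¹) ∂dA
      = ENNReal.ofReal (Real.log (1 / (1 - t ^ 2)) - Real.log (1 / (1 - s ^ 2))) := by
  have hsub : closedBall (0:ℂ) s ⊆ ball (0:ℂ) t := closedBall_subset_ball (by exact_mod_cast hst)
  have hunion : ball (0:ℂ) t = ann s t ∪ closedBall (0:ℂ) s := by
    rw [ann, diff_union_of_subset hsub]
  have hdisj : Disjoint (ann s t) (closedBall (0:ℂ) s) := disjoint_sdiff_left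
  have hsplit : (∫⁻ z in ball (0:ℂ) t, ENNReal.ofReal ((1 - ‖z‖ ^ 2)⁻¹) ∂dA)
      = (∫⁻ z in ann s t, ENNReal.ofReal ((1 - ‖z‖ ^ 2)⁻¹) ∂dA)
        + ∫⁻ z in closedBall (0:ℂ) s, ENNReal.ofReal ((1 - ‖z‖ ^ 2)⁻¹) ∂dA := by
    rw [hunion, lintegral_union measurableSet_closedBall hdisj]
  have hcb : (∫⁻ z in closedBall (0:ℂ) s, ENNReal.ofReal ((1 - ‖z‖ ^ 2)⁻¹) ∂dA)
      = ENNReal.ofReal (Real.log (1 / (1 - s ^ 2))) := by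
    rw [← setLIntegral_congr (ball_ae_closedBall s)]
    exact ball_linteg s h0 (hst.trans h1)
  have hb := ball_linteg t (h0.trans hst.le) h1
  rw [hb, hcb] at hsplit
  have hle : Real.log (1 / (1 - s ^ 2)) ≤ Real.log (1 / (1 - t ^ 2)) := by
    have h1t : (0:ℝ) < 1 - t ^ 2 := by nlinarith
    have h1s : (0:ℝ) < 1 - s ^ 2 := by nlinarith
    apply Real.log_le_log (by positivity)
    apply one_div_le_one_div_of_le h1t
    nlinarith
  have : ENNReal.ofReal (Real.log (1 / (1 - t ^ 2)) - Real.log (1 / (1 - s ^ 2)))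
      + ENNReal.ofReal (Real.log (1 / (1 - s ^ 2))) = ENNReal.ofReal (Real.log (1 / (1 - t ^ 2))) := by
    rw [← ENNReal.ofReal_add (by linarith) ?hnn, sub_add_cancel]
    case hnn =>
      have h1s : (0:ℝ) < 1 - s ^ 2 := by nlinarith
      apply Real.log_nonneg
      exact (le_div_iff₀ h1s).2 (by nlinarith)
  rw [← this] at hsplit
  exact ((ENNReal.add_left_inj ENNReal.ofReal_ne_top).1 hsplit.symm)

lemma aux_real (a b L : ℝ) (e : ℝ → ℝ) (ha0 : 0 ≤ a) (hb0 : 0 ≤ b) (hL : 0 < L)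
    (heq : ∀ t : ℝ, 0 ≤ t → e t + 2 * t * b = t ^ 2 * a + L)
    (hmono : ∀ t : ℝ, 0 ≤ t → e 1 ≤ e t) (hnn : 0 ≤ e 1) : a ≤ L := by
  rcases eq_or_lt_of_le ha0 with h | hapos
  · linarith
  · set t0 : ℝ := b / a with ht0def
    have ht0 : (0:ℝ) ≤ t0 := by positivity
    have h1 := heq 1 zero_le_one
    have h2 := heq t0 ht0
    have hle := hmono t0 ht0
    have key0 : t0 * a = b := div_mul_cancel₀ b hapos.ne'
    have hsqa : t0 ^ 2 * a = t0 * b := by rw [pow_two, mul_assoc, key0]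
    rw [hsqa] at h2
    have h3 : a - 2 * b + t0 * b ≤ 0 := by nlinarith [hle]
    have h5 : t0 * b * a = b * b := by rw [mul_right_comm, key0]
    have h6 : (a - 2 * b + t0 * b) * a ≤ 0 := mul_nonpos_of_nonpos_of_nonneg h3 hapos.le
    have h7 : a * a - 2 * a * b + b * b ≤ 0 := by nlinarith [h6, h5]
    nlinarith [h7, hnn, h1, sq_nonneg (a - b)]

lemma key (r δ : ℝ) (f : ℂ → ℂ) (hr0 : 0 < r) (hr1 : r < 1) (hδ0 : 0 < δ) (hδ1 : δ < 1)
    (hmin : IsMinH r f) :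
    (ENNReal.ofReal (Real.log (1 / (1 - r ^ 2))))⁻¹ *
        (∫⁻ z in ann (r * (1 - δ)) r, ENNReal.ofReal (‖f z‖) ∂dA)
      ≤ ENNReal.ofReal (Real.sqrt (1 - Real.log (1 / (1 - r ^ 2 * (1 - δ) ^ 2))
          / Real.log (1 / (1 - r ^ 2)))) := by
  -- basic positivity facts
  set L : ℝ := Real.log (1 / (1 - r ^ 2)) with hLdef
  set s : ℝ := r * (1 - δ) with hsdef
  have hr2 : (0:ℝ) < 1 - r ^ 2 := by nlinarith
  have hL : 0 < L := Real.log_pos (by rw [lt_div_iff₀ hr2]; nlinarith)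
  have hs0 : 0 < s := by apply mul_pos hr0; linarith
  have hsr : s < r := by
    calc s = r * (1 - δ) := rfl
    _ < r * 1 := by apply mul_lt_mul_of_pos_left _ hr0; linarith
    _ = r := by ring
  have hs1 : s < 1 := hsr.trans hr1
  set L' : ℝ := Real.log (1 / (1 - s ^ 2)) with hL'def
  have hs2 : (0:ℝ) < 1 - s ^ 2 := by nlinarith
  have hL'0 : 0 ≤ L' := by
    apply Real.log_nonneg
    rw [le_div_iff₀ hs2]; nlinarith
  have hL'L : L' ≤ L := by
    apply Real.log_le_log (by positivity)
    apply one_div_le_one_div_of_le hr2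
    nlinarith
  -- measurability
  have hfc : ContinuousOn f (ball (0:ℂ) 1) := hmin.1.continuousOn
  have hfm : AEMeasurable f (dA.restrict (ball (0:ℂ) r)) :=
    (hfc.mono (ball_subset_ball hr1.le)).aemeasurable measurableSet_ball
  have habs : AEMeasurable (fun z => (‖f z‖ : ℝ)) (dA.restrict (ball (0:ℂ) r)) :=
    continuous_norm.measurable.comp_aemeasurable hfm
  have hcm : Measurable (fun z : ℂ => (1 - ‖z‖ ^ 2 : ℝ)) :=
    (continuous_const.sub (continuous_norm.pow 2)).measurable
  -- finiteness
  obtain ⟨M, hM⟩ : ∃ M : ℝ, ∀ z ∈ closedBall (0:ℂ) r, ‖f z‖ ≤ M := by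
    obtain ⟨M, hM⟩ := (isCompact_closedBall (0:ℂ) r).exists_bound_of_continuousOn
      (hfc.mono (closedBall_subset_ball hr1))
    exact ⟨M, fun z hz => hM z hz⟩
  have hM0 : 0 ≤ M := le_trans (norm_nonneg _) (hM 0 (mem_closedBall_self hr0.le))
  have hdAfin : dA (ball (0:ℂ) r) ≠ ∞ := by
    rw [dA]
    simp only [Measure.smul_apply, smul_eq_mul]
    exact ENNReal.mul_ne_top (by simp [ENNReal.inv_ne_top, Real.pi_pos]) measure_ball_lt_top.ne
  set A2 : ℝ≥0∞ := ∫⁻ z in ball (0:ℂ) r,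
      ENNReal.ofReal ((1 - ‖z‖ ^ 2) * ‖f z‖ ^ 2) ∂dA with hA2def
  set B : ℝ≥0∞ := ∫⁻ z in ball (0:ℂ) r, ENNReal.ofReal (‖f z‖) ∂dA with hBdef
  have hBfin : B ≠ ∞ := by
    have : B ≤ ENNReal.ofReal M * dA (ball (0:ℂ) r) := by
      rw [hBdef, ← setLIntegral_const]
      exact setLIntegral_mono' measurableSet_ball fun z hz =>
        ENNReal.ofReal_le_ofReal (hM z (ball_subset_closedBall hz))
    exact (this.trans_lt (ENNReal.mul_lt_top ENNReal.ofReal_lt_top hdAfin.lt_top)).ne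
  have hA2fin : A2 ≠ ∞ := by
    have : A2 ≤ ENNReal.ofReal (M ^ 2) * dA (ball (0:ℂ) r) := by
      rw [hA2def, ← setLIntegral_const]
      refine setLIntegral_mono' measurableSet_ball fun z hz => ENNReal.ofReal_le_ofReal ?_
      have h1 : ‖f z‖ ≤ M := hM z (ball_subset_closedBall hz)
      have h2 : ‖z‖ < r := by
        exact mem_ball_zero_iff.1 hz
      nlinarith [norm_nonneg (f z), norm_nonneg z]
    exact (this.trans_lt (ENNReal.mul_lt_top ENNReal.ofReal_lt_top hdAfin.lt_top)).ne
  -- the family of trial integrals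
  set E : ℝ → ℝ≥0∞ := fun t => ∫⁻ z in ball (0:ℂ) r,
      ENNReal.ofReal (((1 - ‖z‖ ^ 2) * (t * ‖f z‖) - 1) ^ 2
        / (1 - ‖z‖ ^ 2)) ∂dA with hEdef
  -- positivity of c on the ball
  have hcball : ∀ z ∈ ball (0:ℂ) r, (0:ℝ) < 1 - ‖z‖ ^ 2 := by
    intro z hz
    have h2 : ‖z‖ < r := by
      exact mem_ball_zero_iff.1 hz
    nlinarith [norm_nonneg z]
  -- expansion identity
  have hexp : ∀ t : ℝ, 0 ≤ t →
      E t + ENNReal.ofReal (2 * t) * B = ENNReal.ofReal (t ^ 2) * A2 + ENNReal.ofReal L := by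
    intro t ht
    have hmeas2 : AEMeasurable (fun z => ENNReal.ofReal (‖f z‖))
        (dA.restrict (ball (0:ℂ) r)) := habs.ennreal_ofReal
    have hmeasA : AEMeasurable (fun z : ℂ =>
        ENNReal.ofReal ((1 - ‖z‖ ^ 2) * ‖f z‖ ^ 2))
        (dA.restrict (ball (0:ℂ) r)) :=
      ((hcm.aemeasurable.restrict.mul (habs.pow_const 2)).ennreal_ofReal)
    calc E t + ENNReal.ofReal (2 * t) * B
        = ∫⁻ z in ball (0:ℂ) r,
            (ENNReal.ofReal (((1 - ‖z‖ ^ 2) * (t * ‖f z‖) - 1) ^ 2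
              / (1 - ‖z‖ ^ 2))
             + ENNReal.ofReal (2 * t) * ENNReal.ofReal (‖f z‖)) ∂dA := by
          rw [lintegral_add_right' _ (hmeas2.const_mul _), hEdef,
            lintegral_const_mul'' _ hmeas2, hBdef]
      _ = ∫⁻ z in ball (0:ℂ) r,
            (ENNReal.ofReal (t ^ 2) *
              ENNReal.ofReal ((1 - ‖z‖ ^ 2) * ‖f z‖ ^ 2)
             + ENNReal.ofReal ((1 - ‖z‖ ^ 2)⁻¹)) ∂dA := by
          refine setLIntegral_congr_fun measurableSet_ball (fun z hz => ?_)
          have hc := hcball z hz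
          set c := 1 - ‖z‖ ^ 2
          set aa := ‖f z‖
          have ha : 0 ≤ aa := norm_nonneg _
          rw [← ENNReal.ofReal_mul (by positivity), ← ENNReal.ofReal_mul (by positivity),
            ← ENNReal.ofReal_add (by positivity) (by positivity),
            ← ENNReal.ofReal_add (by positivity) (by positivity)]
          congr 1
          field_simp
          ring
      _ = ENNReal.ofReal (t ^ 2) * A2 + ENNReal.ofReal L := by
          rw [lintegral_add_right' _ (g := fun z : ℂ => ENNReal.ofReal ((1 - ‖z‖ ^ 2)⁻¹))
              (hcm.inv.aemeasurable.restrict.ennreal_ofReal),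
            lintegral_const_mul'' _ hmeasA, ball_linteg r hr0.le hr1, hA2def]
  -- minimality gives E 1 ≤ E t
  have hLne0 : ENNReal.ofReal L ≠ 0 := (ENNReal.ofReal_pos.2 hL).ne'
  have hEmin : ∀ t : ℝ, 0 ≤ t → E 1 ≤ E t := by
    intro t ht
    have hg : DifferentiableOn ℂ (fun z => (t:ℂ) * f z) (ball (0:ℂ) 1) :=
      (differentiableOn_const _).mul hmin.1
    have h2 := hmin.2 _ hg
    rw [rhoH, rhoH] at h2
    have hcancel := (ENNReal.mul_le_mul_iff_right (a := (ENNReal.ofReal L)⁻¹)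
      (by simpa using ENNReal.ofReal_ne_top) (by simpa using hLne0)).1 h2
    have he1 : (∫⁻ z in ball (0:ℂ) r,
        ENNReal.ofReal (((1 - ‖z‖ ^ 2) * ‖f z‖ - 1) ^ 2
          / (1 - ‖z‖ ^ 2)) ∂dA) = E 1 := by
      rw [hEdef]
      refine setLIntegral_congr_fun measurableSet_ball (fun z hz => ?_)
      norm_num
    have het : (∫⁻ z in ball (0:ℂ) r,
        ENNReal.ofReal (((1 - ‖z‖ ^ 2) * ‖(t:ℂ) * f z‖ - 1) ^ 2
          / (1 - ‖z‖ ^ 2)) ∂dA) = E t := by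
      rw [hEdef]
      refine setLIntegral_congr_fun measurableSet_ball (fun z hz => ?_)
      rw [norm_mul, Complex.norm_real, Real.norm_of_nonneg ht]
    rw [he1, het] at hcancel
    exact hcancel
  -- pass to real numbers
  have hEfin : ∀ t : ℝ, 0 ≤ t → E t ≠ ∞ := by
    intro t ht
    have h1 : E t ≤ ENNReal.ofReal (t ^ 2) * A2 + ENNReal.ofReal L := by
      rw [← hexp t ht]; exact le_self_add
    exact (h1.trans_lt (ENNReal.add_lt_top.2
      ⟨ENNReal.mul_lt_top ENNReal.ofReal_lt_top hA2fin.lt_top, ENNReal.ofReal_lt_top⟩)).ne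
  set a : ℝ := A2.toReal with hadef
  set b : ℝ := B.toReal with hbdef
  have ha0 : 0 ≤ a := ENNReal.toReal_nonneg
  have hb0 : 0 ≤ b := ENNReal.toReal_nonneg
  have heq : ∀ t : ℝ, 0 ≤ t → (E t).toReal + 2 * t * b = t ^ 2 * a + L := by
    intro t ht
    have := congrArg ENNReal.toReal (hexp t ht)
    rwa [ENNReal.toReal_add (hEfin t ht) (ENNReal.mul_ne_top ENNReal.ofReal_ne_top hBfin),
      ENNReal.toReal_add (ENNReal.mul_ne_top ENNReal.ofReal_ne_top hA2fin) ENNReal.ofReal_ne_top,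
      ENNReal.toReal_mul, ENNReal.toReal_mul, ENNReal.toReal_ofReal (by positivity),
      ENNReal.toReal_ofReal (by positivity), ENNReal.toReal_ofReal hL.le] at this
  -- the key bound a ≤ L
  have haL : a ≤ L := by
    refine aux_real a b L (fun t => (E t).toReal) ha0 hb0 hL heq ?_ ENNReal.toReal_nonneg
    intro t ht
    exact (ENNReal.toReal_le_toReal (hEfin 1 zero_le_one) (hEfin _ ht)).2 (hEmin _ ht)
  have hA2L : A2 ≤ ENNReal.ofReal L := by
    rw [← ENNReal.ofReal_toReal hA2fin]
    exact ENNReal.ofReal_le_ofReal haL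
  -- Cauchy-Schwarz on the annulus
  have hannsub : ann s r ⊆ ball (0:ℂ) r := diff_subset
  have hannm : MeasurableSet (ann s r) := measurableSet_ball.diff measurableSet_closedBall
  have hfm' : AEMeasurable f (dA.restrict (ann s r)) :=
    ((hfc.mono (hannsub.trans (ball_subset_ball hr1.le)))).aemeasurable hannm
  have habs' : AEMeasurable (fun z => (‖f z‖ : ℝ)) (dA.restrict (ann s r)) :=
    continuous_norm.measurable.comp_aemeasurable hfm'
  set F : ℂ → ℝ≥0∞ := fun z => ENNReal.ofReal ((1 - ‖z‖ ^ 2) * ‖f z‖ ^ 2)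
    with hFdef
  set G : ℂ → ℝ≥0∞ := fun z => ENNReal.ofReal ((1 - ‖z‖ ^ 2)⁻¹) with hGdef
  have hFm : AEMeasurable F (dA.restrict (ann s r)) :=
    (hcm.aemeasurable.restrict.mul (habs'.pow_const 2)).ennreal_ofReal
  have hGm : AEMeasurable G (dA.restrict (ann s r)) := hcm.inv.aemeasurable.restrict.ennreal_ofReal
  have hpoint : ∀ z ∈ ann s r, ENNReal.ofReal (‖f z‖)
      = F z ^ (1/2 : ℝ) * G z ^ (1/2 : ℝ) := by
    intro z hz
    have hc := hcball z (hannsub hz)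
    set c := 1 - ‖z‖ ^ 2
    set aa := ‖f z‖
    have ha : 0 ≤ aa := norm_nonneg _
    rw [hFdef, hGdef]
    simp only
    rw [ENNReal.ofReal_rpow_of_nonneg (by positivity) (by norm_num),
      ENNReal.ofReal_rpow_of_nonneg (by positivity) (by norm_num),
      ← ENNReal.ofReal_mul (by positivity), ← Real.mul_rpow (by positivity) (by positivity)]
    congr 1
    have h1 : c * aa ^ 2 * c⁻¹ = aa ^ 2 := by field_simp
    rw [h1, ← Real.rpow_natCast aa 2, ← Real.rpow_mul ha]
    norm_num
  have hT : (∫⁻ z in ann s r, ENNReal.ofReal (‖f z‖) ∂dA)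
      ≤ (ENNReal.ofReal L) ^ (1/2 : ℝ) * (ENNReal.ofReal (L - L')) ^ (1/2 : ℝ) := by
    calc (∫⁻ z in ann s r, ENNReal.ofReal (‖f z‖) ∂dA)
        = ∫⁻ z in ann s r, F z ^ (1/2 : ℝ) * G z ^ (1/2 : ℝ) ∂dA :=
          setLIntegral_congr_fun hannm hpoint
      _ ≤ (∫⁻ z in ann s r, F z ∂dA) ^ (1/2 : ℝ) * (∫⁻ z in ann s r, G z ∂dA) ^ (1/2 : ℝ) :=
          ENNReal.lintegral_mul_norm_pow_le hFm hGm (by norm_num) (by norm_num) (by norm_num)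
      _ ≤ (ENNReal.ofReal L) ^ (1/2 : ℝ) * (ENNReal.ofReal (L - L')) ^ (1/2 : ℝ) := by
          gcongr
          · exact le_trans (lintegral_mono_set hannsub) hA2L
          · rw [ann_linteg s r hs0.le hsr hr1]
  -- conclude
  have hfinal : (ENNReal.ofReal L)⁻¹ *
      ((ENNReal.ofReal L) ^ (1/2 : ℝ) * (ENNReal.ofReal (L - L')) ^ (1/2 : ℝ))
      = ENNReal.ofReal (Real.sqrt (1 - L' / L)) := by
    rw [ENNReal.ofReal_rpow_of_nonneg hL.le (by norm_num),
      ENNReal.ofReal_rpow_of_nonneg (by linarith) (by norm_num),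
      ← ENNReal.ofReal_inv_of_pos hL, ← ENNReal.ofReal_mul (by positivity),
      ← ENNReal.ofReal_mul (by positivity)]
    congr 1
    rw [← Real.sqrt_eq_rpow, ← Real.sqrt_eq_rpow]
    have h1 : 1 - L' / L = (L - L') / L := by field_simp
    have hsl : Real.sqrt L * Real.sqrt L = L := Real.mul_self_sqrt hL.le
    have hslpos : 0 < Real.sqrt L := Real.sqrt_pos.2 hL
    rw [h1, Real.sqrt_div (by linarith : (0:ℝ) ≤ L - L') L, eq_div_iff hslpos.ne']
    field_simp
    linear_combination Real.sqrt (L - L') * hsl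
  have hrw : r ^ 2 * (1 - δ) ^ 2 = s ^ 2 := by rw [hsdef]; ring
  calc (ENNReal.ofReal L)⁻¹ * (∫⁻ z in ann s r, ENNReal.ofReal (‖f z‖) ∂dA)
      ≤ (ENNReal.ofReal L)⁻¹ *
        ((ENNReal.ofReal L) ^ (1/2 : ℝ) * (ENNReal.ofReal (L - L')) ^ (1/2 : ℝ)) := by gcongr
    _ = ENNReal.ofReal (Real.sqrt (1 - L' / L)) := hfinal
    _ = ENNReal.ofReal (Real.sqrt (1 - Real.log (1 / (1 - r ^ 2 * (1 - δ) ^ 2)) / L)) := by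
        rw [hrw]

lemma part2 (f : ℝ → ℂ → ℂ) (hf : ∀ r ∈ Ioo (0:ℝ) 1, IsMinH r (f r)) :
    Tendsto (fun r : ℝ => (ENNReal.ofReal (Real.log (1 / (1 - r ^ 2))))⁻¹ *
        ∫⁻ z in ann (r * (1 - (1 - r))) r, ENNReal.ofReal (‖f r z‖) ∂dA)
      (𝓝[<] (1:ℝ)) (𝓝 0) := by
  set g : ℝ → ℝ≥0∞ := fun r => ENNReal.ofReal (Real.sqrt
    (1 - Real.log (1 / (1 - r ^ 2 * (1 - (1 - r)) ^ 2)) / Real.log (1 / (1 - r ^ 2)))) with hgdef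
  have hev : Ioo (0:ℝ) 1 ∈ 𝓝[<] (1:ℝ) := Ioo_mem_nhdsLT_of_mem (by constructor <;> norm_num)
  have hbound : ∀ᶠ r in 𝓝[<] (1:ℝ),
      (ENNReal.ofReal (Real.log (1 / (1 - r ^ 2))))⁻¹ *
        (∫⁻ z in ann (r * (1 - (1 - r))) r, ENNReal.ofReal (‖f r z‖) ∂dA) ≤ g r := by
    filter_upwards [hev] with r hr
    exact key r (1 - r) (f r) hr.1 hr.2 (by linarith [hr.2]) (by linarith [hr.1]) (hf r hr)
  -- the bound tends to 0
  have hdenom : Tendsto (fun r : ℝ => Real.log (1 / (1 - r ^ 2))) (𝓝[<] (1:ℝ)) atTop := by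
    have h1 : Tendsto (fun r : ℝ => 1 - r ^ 2) (𝓝[<] (1:ℝ)) (𝓝[>] (0:ℝ)) := by
      rw [tendsto_nhdsWithin_iff]
      constructor
      · have h0 : Tendsto (fun r : ℝ => 1 - r ^ 2) (𝓝 (1:ℝ)) (𝓝 (1 - 1 ^ 2)) :=
          (continuous_const.sub (continuous_pow 2)).tendsto 1
        simpa using h0.mono_left nhdsWithin_le_nhds
      · filter_upwards [hev] with r hr
        have : r ^ 2 < 1 := by nlinarith [hr.1, hr.2]
        exact mem_Ioi.2 (by linarith)
    have h2 : Tendsto (fun r : ℝ => Real.log (1 - r ^ 2)) (𝓝[<] (1:ℝ)) atBot :=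
      Real.tendsto_log_nhdsGT_zero.comp h1
    have h3 : Tendsto (fun r : ℝ => -Real.log (1 - r ^ 2)) (𝓝[<] (1:ℝ)) atTop :=
      tendsto_neg_atBot_atTop.comp h2
    refine h3.congr fun r => ?_
    rw [one_div, Real.log_inv]
  have hnum : Tendsto (fun r : ℝ => Real.log (1 + r ^ 2)) (𝓝[<] (1:ℝ)) (𝓝 (Real.log 2)) := by
    have hc : ContinuousAt (fun r : ℝ => Real.log (1 + r ^ 2)) 1 := by
      apply (Real.continuousAt_log (by norm_num)).comp
      fun_prop
    have h0 := hc.tendsto.mono_left (nhdsWithin_le_nhds (s := Iio (1:ℝ)))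
    norm_num at h0
    exact h0
  have hdiv : Tendsto (fun r : ℝ => Real.log (1 + r ^ 2) / Real.log (1 / (1 - r ^ 2)))
      (𝓝[<] (1:ℝ)) (𝓝 0) := hnum.div_atTop hdenom
  have hφ : Tendsto (fun r : ℝ =>
      1 - Real.log (1 / (1 - r ^ 2 * (1 - (1 - r)) ^ 2)) / Real.log (1 / (1 - r ^ 2)))
      (𝓝[<] (1:ℝ)) (𝓝 0) := by
    refine Tendsto.congr' ?_ hdiv
    filter_upwards [hev] with r hr
    have hr2 : (0:ℝ) < 1 - r ^ 2 := by nlinarith [hr.1, hr.2]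
    have hr2' : (0:ℝ) < 1 + r ^ 2 := by nlinarith [hr.1]
    have hL : 0 < Real.log (1 / (1 - r ^ 2)) :=
      Real.log_pos (by rw [lt_div_iff₀ hr2]; nlinarith [hr.1, hr.2])
    have hkey : Real.log (1 / (1 - r ^ 2 * (1 - (1 - r)) ^ 2))
        = Real.log (1 / (1 - r ^ 2)) - Real.log (1 + r ^ 2) := by
      have h4 : 1 - r ^ 2 * (1 - (1 - r)) ^ 2 = (1 - r ^ 2) * (1 + r ^ 2) := by ring
      rw [h4, one_div, mul_inv, Real.log_mul (by positivity) (by positivity),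
        Real.log_inv, Real.log_inv, one_div, Real.log_inv]
      ring
    rw [hkey]
    field_simp
    ring
  have hg0 : Tendsto g (𝓝[<] (1:ℝ)) (𝓝 0) := by
    rw [hgdef, ← ENNReal.ofReal_zero, ← Real.sqrt_zero]
    exact ENNReal.tendsto_ofReal (Real.continuous_sqrt.continuousAt.tendsto.comp hφ)
  exact tendsto_of_tendsto_of_tendsto_of_le_of_le' tendsto_const_nhds hg0
    (Eventually.of_forall fun r => zero_le) hbound

/-- hyperbolic L¹-non-concentration. For `0 < r < 1`, `0 < δ < 1` and
`f` a minimizer of `ρ_{H,r}`,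
`(1/log(1/(1-r²))) ∫_{𝔸(r(1-δ),r)} |f| dA ≤ (1 - log(1/(1-r²(1-δ)²))/log(1/(1-r²)))^{1/2}`;
and if for each `r` one takes `δ = 1-r` and `f_r` a minimizer of `ρ_{H,r}`, then
`(1/log(1/(1-r²))) ∫_{𝔸(r(1-δ),r)} |f_r| dA → 0` as `r → 1⁻`. -/
theorem hyperbolic_L1_nonconcentration :
    (∀ r δ : ℝ, ∀ f : ℂ → ℂ, 0 < r → r < 1 → 0 < δ → δ < 1 → IsMinH r f →
      (ENNReal.ofReal (Real.log (1 / (1 - r ^ 2))))⁻¹ *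
          (∫⁻ z in ann (r * (1 - δ)) r, ENNReal.ofReal (‖f z‖) ∂dA)
        ≤ ENNReal.ofReal
            (Real.sqrt (1 - Real.log (1 / (1 - r ^ 2 * (1 - δ) ^ 2))
              / Real.log (1 / (1 - r ^ 2))))) ∧
    (∀ f : ℝ → ℂ → ℂ, (∀ r ∈ Ioo (0:ℝ) 1, IsMinH r (f r)) →
      Tendsto (fun r : ℝ => (ENNReal.ofReal (Real.log (1 / (1 - r ^ 2))))⁻¹ *
          ∫⁻ z in ann (r * (1 - (1 - r))) r, ENNReal.ofReal (‖f r z‖) ∂dA)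
        (𝓝[<] (1:ℝ)) (𝓝 0)) :=
  ⟨fun r δ f hr0 hr1 hδ0 hδ1 hmin => key r δ f hr0 hr1 hδ0 hδ1 hmin, part2⟩
end
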